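/- arXiv:2002.04282 — 3 statements merged into one kernel-verified Lean document; each statement's English description precedes it below -/
import Mathlib

section
/- Let X ⊆ ℝ^n be ⟨ℝ,+,<,ℤ⟩-definable and let x ∈ ℝ^n. Then x is X-singular if and only if for every r > 0 there exists s > 0 such that for every nonzero vector v ∈ ℝ^n with |v| < s there exist points y, z ∈ B(x,r) with y = z + v and (y ∈ X ⟺ z ∉ X). -/
open FirstOrder

/-- The language of `⟨ℝ,+,<,1⟩`: one constant, one binary function, one binary relation. -/
def SsLang : Language where
  Functions := fun m => match m with
    | 0 => Unit
    | 2 => Unit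
    | _ => Empty
  Relations := fun m => match m with
    | 2 => Unit
    | _ => Empty

noncomputable instance ssStructure : SsLang.Structure ℝ where
  funMap := fun {m} f x =>
    match m, f with
    | 0, _ => (1 : ℝ)
    | 2, _ => x 0 + x 1
  RelMap := fun {m} r x =>
    match m, r with
    | 2, _ => x 0 < x 1

/-- The language of `⟨ℝ,+,<,ℤ⟩`: one binary function, one unary relation, one binary relation. -/
def LsLang : Language where
  Functions := fun m => match m with
    | 2 => Unit
    | _ => Empty
  Relations := fun m => match m with
    | 1 => Unit
    | 2 => Unit
    | _ => Empty

noncomputable instance lsStructure : LsLang.Structure ℝ where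
  funMap := fun {m} f x =>
    match m, f with
    | 2, _ => x 0 + x 1
  RelMap := fun {m} r x =>
    match m, r with
    | 1, _ => ∃ k : ℤ, x 0 = (k : ℝ)
    | 2, _ => x 0 < x 1

/-- `X ⊆ ℝ^n` is definable without parameters in `⟨ℝ,+,<,1⟩`. -/
def SsDefinable {n : ℕ} (X : Set (Fin n → ℝ)) : Prop :=
  Set.Definable (∅ : Set ℝ) SsLang X

/-- `X ⊆ ℝ^n` is definable without parameters in `⟨ℝ,+,<,ℤ⟩`. -/
def LsDefinable {n : ℕ} (X : Set (Fin n → ℝ)) : Prop :=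
  Set.Definable (∅ : Set ℝ) LsLang X

def SsDefinable1 (A : Set ℝ) : Prop := SsDefinable {f : Fin 1 → ℝ | f 0 ∈ A}
def LsDefinable1 (A : Set ℝ) : Prop := LsDefinable {f : Fin 1 → ℝ | f 0 ∈ A}

/-- `v` is an `X`-stratum at `x`: for some `r > 0`,
`B(x,r) ∩ L_v(X ∩ B(x,r)) ⊆ X`.  (The sup norm/metric is the default one on `ι → ℝ`.) -/
def IsStratum {ι : Type} [Fintype ι] (X : Set (ι → ℝ)) (x v : ι → ℝ) : Prop :=
  ∃ r > (0 : ℝ), ∀ y ∈ Metric.ball x r,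
    (∃ z ∈ X ∩ Metric.ball x r, ∃ α : ℝ, y = z + α • v) → y ∈ X

/-- `x` is `X`-singular: `Str_X(x) = {0}`. -/
def IsSingular {ι : Type} [Fintype ι] (X : Set (ι → ℝ)) (x : ι → ℝ) : Prop :=
  ∀ v, IsStratum X x v → v = 0

/-- `x ∼_X y`: some translation of a small ball around `x` identifies `X` near `x` and near `y`. -/
def SimX {n : ℕ} (X : Set (Fin n → ℝ)) (x y : Fin n → ℝ) : Prop :=
  ∃ r > (0 : ℝ), ∀ w : Fin n → ℝ, ‖w‖ < r → (x + w ∈ X ↔ y + w ∈ X)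

/-- the dimension of the subspace `Str_X(x)` of strata at `x`. -/
noncomputable def strDim {n : ℕ} (X : Set (Fin n → ℝ)) (x : Fin n → ℝ) : ℕ :=
  Module.finrank ℝ (Submodule.span ℝ {v | IsStratum X x v})

/-- An interval of `ℝ` all of whose finite endpoints are rational: an order-convex set
whose frontier points (i.e. finite endpoints) are all rational. -/
def IsRatInterval (I : Set ℝ) : Prop :=
  I.OrdConnected ∧ ∀ x ∈ frontier I, ∃ q : ℚ, x = (q : ℝ)

namespace St12

open Finset FirstOrder FirstOrder.Language


def dt {ι : Type} [Fintype ι] (a y : ι → ℝ) : ℝ := ∑ i, a i * y i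

lemma dt_add {ι : Type} [Fintype ι] (a u w : ι → ℝ) : dt a (u + w) = dt a u + dt a w := by
  simp [dt, mul_add, Finset.sum_add_distrib]

lemma dt_sub {ι : Type} [Fintype ι] (a u w : ι → ℝ) : dt a (u - w) = dt a u - dt a w := by
  simp [dt, mul_sub, Finset.sum_sub_distrib]

lemma dt_smul {ι : Type} [Fintype ι] (a : ι → ℝ) (c : ℝ) (u : ι → ℝ) :
    dt a (c • u) = c * dt a u := by
  simp [dt, Finset.mul_sum]; congr 1; funext i; ring

lemma dt_single {ι : Type} [Fintype ι] [DecidableEq ι] (i : ι) (u : ι → ℝ) :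
    dt (Pi.single i (1:ℝ)) u = u i := by
  rw [dt, Finset.sum_eq_single i]
  · simp
  · intro b _ hb; simp [Pi.single_apply, hb]
  · intro h; exact absurd (Finset.mem_univ i) h

lemma abs_dt_le {ι : Type} [Fintype ι] (a u : ι → ℝ) (ρ : ℝ) (h : ∀ i, |u i| ≤ ρ) :
    |dt a u| ≤ (∑ i, |a i|) * ρ := by
  calc |dt a u| ≤ ∑ i, |a i * u i| := Finset.abs_sum_le_sum_abs _ _
    _ ≤ ∑ i, |a i| * ρ := by
        apply Finset.sum_le_sum
        intro i _
        rw [abs_mul]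
        exact mul_le_mul_of_nonneg_left (h i) (abs_nonneg _)
    _ = (∑ i, |a i|) * ρ := by rw [Finset.sum_mul]

lemma dt_sumElim {ι : Type} [Fintype ι] (A : (ι ⊕ Unit) → ℝ) (u : ι → ℝ) (f : ℝ) :
    dt A (Sum.elim u fun _ => f) = dt (A ∘ Sum.inl) u + A (Sum.inr ()) * f := by
  rw [dt, Fintype.sum_sum_type]
  simp [dt]

lemma dt_zero_left {ι : Type} [Fintype ι] (u : ι → ℝ) :
    dt (fun _ => (0:ℝ)) u = 0 := by simp [dt]

lemma sign_ne_imp_abs_le {A B : ℝ} (h : SignType.sign A ≠ SignType.sign B) :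
    |A| ≤ |B - A| := by
  by_contra hc
  push_neg at hc
  rcases lt_trichotomy A 0 with hA | hA | hA
  · have hB : B < 0 := by
      have h2 := (abs_lt.mp hc).2
      rw [abs_of_neg hA] at h2
      linarith
    exact h (by rw [sign_neg hA, sign_neg hB])
  · subst hA
    simp at hc
    exact absurd hc (abs_nonneg B).not_gt
  · have hB : 0 < B := by
      have h1 := (abs_lt.mp hc).1
      rw [abs_of_pos hA] at h1
      linarith
    exact h (by rw [sign_pos hA, sign_pos hB])

lemma sign_add_of_abs_lt {e κ : ℝ} (h : |e| < |κ|) :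
    SignType.sign (κ + e) = SignType.sign κ := by
  rcases lt_trichotomy κ 0 with hκ | hκ | hκ
  · rw [sign_neg hκ, sign_neg (by have := (abs_lt.mp h).2; rw [abs_of_neg hκ] at this; linarith)]
  · subst hκ; simp at h; linarith [abs_nonneg e]
  · rw [sign_pos hκ, sign_pos (by have := (abs_lt.mp h).1; rw [abs_of_pos hκ] at this; linarith)]

lemma sign_eq_of_iffs {a b : ℝ} (h1 : 0 < a ↔ 0 < b) (h2 : a < 0 ↔ b < 0) :
    SignType.sign a = SignType.sign b := by
  rcases lt_trichotomy a 0 with ha | ha | ha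
  · rw [sign_neg ha, sign_neg (h2.mp ha)]
  · have hb : b = 0 := by
      by_contra hb
      rcases lt_or_gt_of_ne hb with h | h
      · exact absurd (h2.mpr h) (by rw [ha]; exact lt_irrefl 0)
      · exact absurd (h1.mpr h) (by rw [ha]; exact lt_irrefl 0)
    rw [ha, hb]
  · rw [sign_pos ha, sign_pos (h1.mp ha)]

lemma sign_lt_iff_of_eq {a b : ℝ} (h : SignType.sign a = SignType.sign b) :
    a < 0 ↔ b < 0 := by
  rw [← sign_eq_neg_one_iff, ← sign_eq_neg_one_iff (a := b), h]

lemma sign_pos_iff_of_eq {a b : ℝ} (h : SignType.sign a = SignType.sign b) :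
    0 < a ↔ 0 < b := by
  rw [← sign_eq_one_iff, ← sign_eq_one_iff (a := b), h]

lemma sign_zero_iff_of_eq {a b : ℝ} (h : SignType.sign a = SignType.sign b) :
    a = 0 ↔ b = 0 := by
  rw [← sign_eq_zero_iff, ← sign_eq_zero_iff (a := b), h]

lemma sign_div_transfer {A B d : ℝ} (hd : d ≠ 0) (h : SignType.sign A = SignType.sign B) :
    SignType.sign (A / d) = SignType.sign (B / d) := by
  apply sign_eq_of_iffs
  · rcases lt_or_gt_of_ne hd with hdn | hdp
    · rw [div_pos_iff, div_pos_iff]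
      constructor
      · rintro (⟨hA, _⟩ | ⟨hA, _⟩)
        · linarith
        · right; exact ⟨(sign_lt_iff_of_eq h).mp hA, hdn⟩
      · rintro (⟨hB, _⟩ | ⟨hB, _⟩)
        · linarith
        · right; exact ⟨(sign_lt_iff_of_eq h).mpr hB, hdn⟩
    · rw [div_pos_iff, div_pos_iff]
      constructor
      · rintro (⟨hA, _⟩ | ⟨hA, hd2⟩)
        · left; exact ⟨(sign_pos_iff_of_eq h).mp hA, hdp⟩
        · linarith
      · rintro (⟨hB, _⟩ | ⟨hB, hd2⟩)
        · left; exact ⟨(sign_pos_iff_of_eq h).mpr hB, hdp⟩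
        · linarith
  · rcases lt_or_gt_of_ne hd with hdn | hdp
    · rw [div_neg_iff, div_neg_iff]
      constructor
      · rintro (⟨hA, hd2⟩ | ⟨hA, _⟩)
        · left; exact ⟨(sign_pos_iff_of_eq h).mp hA, hdn⟩
        · linarith
      · rintro (⟨hB, hd2⟩ | ⟨hB, _⟩)
        · left; exact ⟨(sign_pos_iff_of_eq h).mpr hB, hdn⟩
        · linarith
    · rw [div_neg_iff, div_neg_iff]
      constructor
      · rintro (⟨hA, hd2⟩ | ⟨hA, _⟩)
        · linarith
        · right; exact ⟨(sign_lt_iff_of_eq h).mp hA, hdp⟩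
      · rintro (⟨hB, hd2⟩ | ⟨hB, _⟩)
        · linarith
        · right; exact ⟨(sign_lt_iff_of_eq h).mpr hB, hdp⟩

noncomputable def fra {ι : Type} (y : ι → ℝ) : ι → ℝ := fun i => Int.fract (y i)

/-- `X` is determined by the floor vector and finitely many sign data of the fractional part. -/
def Nice {ι : Type} [Fintype ι] (X : Set (ι → ℝ)) : Prop :=
  ∃ H : Finset ((ι → ℝ) × ℝ), ∀ y z : ι → ℝ,
    (∀ i, ⌊y i⌋ = ⌊z i⌋) →
    (∀ p ∈ H, SignType.sign (dt p.1 (fra y) - p.2) = SignType.sign (dt p.1 (fra z) - p.2)) →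
    (y ∈ X ↔ z ∈ X)

def LocallyConic {ι : Type} [Fintype ι] (X : Set (ι → ℝ)) (x : ι → ℝ) : Prop :=
  ∃ ρ > (0:ℝ), ∃ J : Finset (ι → ℝ),
    ∀ y ∈ Metric.ball x ρ, ∀ z ∈ Metric.ball x ρ,
      (∀ a ∈ J, SignType.sign (dt a (y - x)) = SignType.sign (dt a (z - x))) →
      (y ∈ X ↔ z ∈ X)

set_option maxHeartbeats 1000000 in
/-- Fourier–Motzkin style: one can move the last coordinate value `f` to a value `f'`
matching all sign data, provided the "resolvent" sign data of `u` and `u'` agree. -/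
lemma fm {ι : Type} [Fintype ι] (G : Finset ((ι → ℝ) × ℝ × ℝ)) (u u' : ι → ℝ)
    (hfree : ∀ p ∈ G, p.2.1 = 0 →
      SignType.sign (dt p.1 u - p.2.2) = SignType.sign (dt p.1 u' - p.2.2))
    (hres : ∀ p ∈ G, ∀ q ∈ G, p.2.1 ≠ 0 → q.2.1 ≠ 0 →
      SignType.sign ((p.2.2 - dt p.1 u) / p.2.1 - (q.2.2 - dt q.1 u) / q.2.1) =
      SignType.sign ((p.2.2 - dt p.1 u') / p.2.1 - (q.2.2 - dt q.1 u') / q.2.1))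
    (f : ℝ) : ∃ f' : ℝ, ∀ p ∈ G,
      SignType.sign (dt p.1 u' + p.2.1 * f' - p.2.2) =
      SignType.sign (dt p.1 u + p.2.1 * f - p.2.2) := by
  classical
  set β : ((ι → ℝ) × ℝ × ℝ) → (ι → ℝ) → ℝ := fun p w => (p.2.2 - dt p.1 w) / p.2.1 with hβdef
  set P := G.filter (fun p => p.2.1 ≠ 0) with hPdef
  have hval : ∀ p ∈ P, ∀ (w : ι → ℝ) (g : ℝ),
      dt p.1 w + p.2.1 * g - p.2.2 = p.2.1 * (g - β p w) := by
    intro p hp w g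
    have hk := (Finset.mem_filter.mp hp).2
    rw [hβdef]
    field_simp
    ring
  have hcmp : ∀ p ∈ P, ∀ q ∈ P,
      SignType.sign (β p u - β q u) = SignType.sign (β p u' - β q u') := by
    intro p hp q hq
    exact hres p (Finset.mem_filter.mp hp).1 q (Finset.mem_filter.mp hq).1
      (Finset.mem_filter.mp hp).2 (Finset.mem_filter.mp hq).2
  suffices hs : ∃ f', ∀ p ∈ P, SignType.sign (f' - β p u') = SignType.sign (f - β p u) by
    obtain ⟨f', hf'⟩ := hs
    refine ⟨f', ?_⟩
    intro p hp
    by_cases hk : p.2.1 = 0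
    · rw [hk, zero_mul, zero_mul, add_zero, add_zero]
      exact (hfree p hp hk).symm
    · have hpP : p ∈ P := Finset.mem_filter.mpr ⟨hp, hk⟩
      rw [hval p hpP u' f', hval p hpP u f, sign_mul, sign_mul, hf' p hpP]
  by_cases hPe : ∃ p ∈ P, β p u = f
  · obtain ⟨p₀, hp₀, hfp₀⟩ := hPe
    refine ⟨β p₀ u', ?_⟩
    intro p hp
    rw [← hfp₀]
    exact (hcmp p₀ hp₀ p hp).symm
  · push_neg at hPe
    set L := P.filter (fun p => β p u < f) with hLdef
    set U := P.filter (fun p => f < β p u) with hUdef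
    have hLU : ∀ p ∈ P, p ∈ L ∨ p ∈ U := by
      intro p hp
      rcases lt_trichotomy (β p u) f with h | h | h
      · left; exact Finset.mem_filter.mpr ⟨hp, h⟩
      · exact absurd h (hPe p hp)
      · right; exact Finset.mem_filter.mpr ⟨hp, h⟩
    have hLsub : L ⊆ P := Finset.filter_subset _ _
    have hUsub : U ⊆ P := Finset.filter_subset _ _
    have hLU' : ∀ p ∈ L, ∀ q ∈ U, β p u' < β q u' := by
      intro p hp q hq
      have h1 : β p u - β q u < 0 := by
        linarith [(Finset.mem_filter.mp hp).2, (Finset.mem_filter.mp hq).2]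
      have h2 := hcmp p (hLsub hp) q (hUsub hq)
      rw [sign_neg h1] at h2
      have h3 := sign_eq_neg_one_iff.mp h2.symm
      linarith
    have hgoal : ∀ f'' : ℝ, (∀ p ∈ L, β p u' < f'') → (∀ q ∈ U, f'' < β q u') →
        ∀ p ∈ P, SignType.sign (f'' - β p u') = SignType.sign (f - β p u) := by
      intro f'' hLb hUb p hp
      rcases hLU p hp with h | h
      · rw [sign_pos (by linarith [hLb p h] : (0:ℝ) < f'' - β p u'),
          sign_pos (by linarith [(Finset.mem_filter.mp h).2] : (0:ℝ) < f - β p u)]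
      · rw [sign_neg (by linarith [hUb p h] : f'' - β p u' < 0),
          sign_neg (by linarith [(Finset.mem_filter.mp h).2] : f - β p u < 0)]
    rcases L.eq_empty_or_nonempty with hLe | hLne
    · rcases U.eq_empty_or_nonempty with hUe | hUne
      · exact ⟨0, hgoal 0 (by simp [hLe]) (by simp [hUe])⟩
      · refine ⟨(U.image fun q => β q u').min' (hUne.image _) - 1, hgoal _ ?_ ?_⟩
        · simp [hLe]
        · intro q hq
          have := Finset.min'_le (U.image fun q => β q u') _ (Finset.mem_image_of_mem _ hq)
          linarith
    · rcases U.eq_empty_or_nonempty with hUe | hUne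
      · refine ⟨(L.image fun p => β p u').max' (hLne.image _) + 1, hgoal _ ?_ ?_⟩
        · intro p hp
          have := Finset.le_max' (L.image fun p => β p u') _ (Finset.mem_image_of_mem _ hp)
          linarith
        · simp [hUe]
      · have hmaxmin : (L.image fun p => β p u').max' (hLne.image _) <
            (U.image fun q => β q u').min' (hUne.image _) := by
          rw [Finset.max'_lt_iff]
          intro b hb
          obtain ⟨p, hp, rfl⟩ := Finset.mem_image.mp hb
          rw [Finset.lt_min'_iff]
          intro c hc
          obtain ⟨q, hq, rfl⟩ := Finset.mem_image.mp hc
          exact hLU' p hp q hq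
        refine ⟨((L.image fun p => β p u').max' (hLne.image _) +
            (U.image fun q => β q u').min' (hUne.image _)) / 2, hgoal _ ?_ ?_⟩
        · intro p hp
          have := Finset.le_max' (L.image fun p => β p u') _ (Finset.mem_image_of_mem _ hp)
          linarith
        · intro q hq
          have := Finset.min'_le (U.image fun q => β q u') _ (Finset.mem_image_of_mem _ hq)
          linarith

lemma nice_empty {ι : Type} [Fintype ι] : Nice (∅ : Set (ι → ℝ)) :=
  ⟨∅, fun _ _ _ _ => by simp⟩

lemma nice_compl {ι : Type} [Fintype ι] {X : Set (ι → ℝ)} (hX : Nice X) : Nice Xᶜ := by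
  obtain ⟨H, hH⟩ := hX
  exact ⟨H, fun y z h1 h2 => not_iff_not.mpr (hH y z h1 h2)⟩

lemma nice_union {ι : Type} [Fintype ι] {X Y : Set (ι → ℝ)} (hX : Nice X) (hY : Nice Y) :
    Nice (X ∪ Y) := by
  obtain ⟨H₁, h₁⟩ := hX
  obtain ⟨H₂, h₂⟩ := hY
  refine ⟨H₁ ∪ H₂, fun y z hf hs => ?_⟩
  have e₁ := h₁ y z hf (fun p hp => hs p (Finset.mem_union_left _ hp))
  have e₂ := h₂ y z hf (fun p hp => hs p (Finset.mem_union_right _ hp))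
  rw [Set.mem_union, Set.mem_union, e₁, e₂]

lemma nice_himp {ι : Type} [Fintype ι] {X Y : Set (ι → ℝ)} (hX : Nice X) (hY : Nice Y) :
    Nice {w : ι → ℝ | w ∈ X → w ∈ Y} := by
  have h := nice_union (nice_compl hX) hY
  convert h using 1
  ext w
  simp [imp_iff_not_or]

-- reindexing

lemma nice_reindex {ι κ : Type} [Fintype ι] [Fintype κ] (e : κ ≃ ι) {X : Set (ι → ℝ)}
    (hX : Nice X) : Nice {w : κ → ℝ | (w ∘ e.symm) ∈ X} := by
  classical
  obtain ⟨H, hH⟩ := hX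
  refine ⟨H.image (fun p => (p.1 ∘ e, p.2)), fun y z hf hs => ?_⟩
  have hdt : ∀ (a : ι → ℝ) (w : κ → ℝ), dt (a ∘ e) w = dt a (w ∘ e.symm) := by
    intro a w
    rw [dt, dt, ← Equiv.sum_comp e (fun i => a i * (w ∘ e.symm) i)]
    apply Finset.sum_congr rfl
    intro j _
    simp
  apply hH (y ∘ e.symm) (z ∘ e.symm) (fun i => hf (e.symm i))
  intro p hp
  have hmem : (p.1 ∘ e, p.2) ∈ H.image (fun p => (p.1 ∘ e, p.2)) :=
    Finset.mem_image_of_mem _ hp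
  have := hs _ hmem
  have hfra : ∀ w : κ → ℝ, fra (w ∘ e.symm) = (fra w) ∘ e.symm := fun w => rfl
  rwa [hdt p.1 (fra y), hdt p.1 (fra z), ← hfra, ← hfra] at this

set_option maxHeartbeats 1000000 in
lemma nice_proj {ι : Type} [Fintype ι] {X : Set ((ι ⊕ Unit) → ℝ)} (hX : Nice X) :
    Nice {y : ι → ℝ | ∃ t : ℝ, Sum.elim y (fun _ => t) ∈ X} := by
  classical
  obtain ⟨H, hH⟩ := hX
  set et : (ι ⊕ Unit) → ℝ := Sum.elim (fun _ => 0) (fun _ => 1) with hetdef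
  set G₀ : Finset (((ι ⊕ Unit) → ℝ) × ℝ) := insert (et, (0:ℝ)) (insert (et, (1:ℝ)) H)
    with hG₀def
  set tri : (((ι ⊕ Unit) → ℝ) × ℝ) → ((ι → ℝ) × ℝ × ℝ) :=
    fun P => (P.1 ∘ Sum.inl, P.1 (Sum.inr ()), P.2) with htridef
  set G : Finset ((ι → ℝ) × ℝ × ℝ) := G₀.image tri with hGdef
  set H' : Finset ((ι → ℝ) × ℝ) :=
    (G₀.image fun P => (P.1 ∘ Sum.inl, P.2)) ∪
    ((G₀ ×ˢ G₀).image fun PQ =>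
      ((PQ.2.1 (Sum.inr ())) • (PQ.1.1 ∘ Sum.inl) - (PQ.1.1 (Sum.inr ())) • (PQ.2.1 ∘ Sum.inl),
       (PQ.2.1 (Sum.inr ())) * PQ.1.2 - (PQ.1.1 (Sum.inr ())) * PQ.2.2)) with hH'def
  refine ⟨H', ?_⟩
  have key : ∀ y z : ι → ℝ, (∀ i, ⌊y i⌋ = ⌊z i⌋) →
      (∀ p ∈ H', SignType.sign (dt p.1 (fra y) - p.2) = SignType.sign (dt p.1 (fra z) - p.2)) →
      (∃ t : ℝ, Sum.elim y (fun _ => t) ∈ X) → (∃ t : ℝ, Sum.elim z (fun _ => t) ∈ X) := by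
    intro y z hfl hsg ⟨t, ht⟩
    set u : ι → ℝ := fra y with hudef
    set u' : ι → ℝ := fra z with hu'def
    set f : ℝ := Int.fract t with hfdef
    -- hypotheses for fm
    have hfree : ∀ p ∈ G, p.2.1 = 0 →
        SignType.sign (dt p.1 u - p.2.2) = SignType.sign (dt p.1 u' - p.2.2) := by
      intro p hp _
      obtain ⟨P, hP, rfl⟩ := Finset.mem_image.mp hp
      exact hsg (P.1 ∘ Sum.inl, P.2)
        (Finset.mem_union_left _ (Finset.mem_image_of_mem _ hP))
    have hres : ∀ p ∈ G, ∀ q ∈ G, p.2.1 ≠ 0 → q.2.1 ≠ 0 →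
        SignType.sign ((p.2.2 - dt p.1 u) / p.2.1 - (q.2.2 - dt q.1 u) / q.2.1) =
        SignType.sign ((p.2.2 - dt p.1 u') / p.2.1 - (q.2.2 - dt q.1 u') / q.2.1) := by
      intro p hp q hq hkp hkq
      obtain ⟨P, hP, rfl⟩ := Finset.mem_image.mp hp
      obtain ⟨Q, hQ, rfl⟩ := Finset.mem_image.mp hq
      have hpair : (P, Q) ∈ G₀ ×ˢ G₀ := Finset.mem_product.mpr ⟨hP, hQ⟩
      have hmem := hsg _ (Finset.mem_union_right _ (Finset.mem_image_of_mem _ hpair))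
      -- identity : β_P w - β_Q w = (-(R w)) / (k_P * k_Q)
      have hid : ∀ w : ι → ℝ,
          ((tri P).2.2 - dt (tri P).1 w) / (tri P).2.1 -
          ((tri Q).2.2 - dt (tri Q).1 w) / (tri Q).2.1 =
          (-(dt ((Q.1 (Sum.inr ())) • (P.1 ∘ Sum.inl) - (P.1 (Sum.inr ())) • (Q.1 ∘ Sum.inl)) w -
             ((Q.1 (Sum.inr ())) * P.2 - (P.1 (Sum.inr ())) * Q.2))) /
          ((tri P).2.1 * (tri Q).2.1) := by
        intro w
        have hdt1 : dt ((Q.1 (Sum.inr ())) • (P.1 ∘ Sum.inl) - (P.1 (Sum.inr ())) • (Q.1 ∘ Sum.inl)) w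
            = (Q.1 (Sum.inr ())) * dt (P.1 ∘ Sum.inl) w - (P.1 (Sum.inr ())) * dt (Q.1 ∘ Sum.inl) w := by
          simp only [dt, Pi.sub_apply, Pi.smul_apply, smul_eq_mul, Finset.mul_sum]
          rw [← Finset.sum_sub_distrib]
          apply Finset.sum_congr rfl
          intro i _
          ring
        rw [hdt1, htridef]
        simp only
        have hkp' : P.1 (Sum.inr ()) ≠ 0 := hkp
        have hkq' : Q.1 (Sum.inr ()) ≠ 0 := hkq
        field_simp
        ring
      rw [hid u, hid u']
      apply sign_div_transfer (mul_ne_zero hkp hkq)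
      have hneg : ∀ A : ℝ, SignType.sign (-A) = -SignType.sign A := fun A => Left.sign_neg A
      rw [hneg, hneg, hmem]
    obtain ⟨f', hf'⟩ := fm G u u' hfree hres f
    -- bound signs
    have hbd0 : SignType.sign f' = SignType.sign f := by
      have h0 := hf' (tri (et, (0:ℝ))) (Finset.mem_image_of_mem _ (Finset.mem_insert_self _ _))
      have he1 : (tri (et, (0:ℝ))).1 = fun _ => (0:ℝ) := by
        funext i; simp [htridef, hetdef]
      have he2 : (tri (et, (0:ℝ))).2.1 = 1 := by simp [htridef, hetdef]
      have he3 : (tri (et, (0:ℝ))).2.2 = 0 := by simp [htridef]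
      rw [he1, he2, he3, dt_zero_left, dt_zero_left] at h0
      simpa using h0
    have hbd1 : SignType.sign (f' - 1) = SignType.sign (f - 1) := by
      have h0 := hf' (tri (et, (1:ℝ)))
        (Finset.mem_image_of_mem _ (Finset.mem_insert_of_mem (Finset.mem_insert_self _ _)))
      have he1 : (tri (et, (1:ℝ))).1 = fun _ => (0:ℝ) := by
        funext i; simp [htridef, hetdef]
      have he2 : (tri (et, (1:ℝ))).2.1 = 1 := by simp [htridef, hetdef]
      have he3 : (tri (et, (1:ℝ))).2.2 = 1 := by simp [htridef]
      rw [he1, he2, he3, dt_zero_left, dt_zero_left] at h0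
      simpa using h0
    have hf0 : 0 ≤ f := Int.fract_nonneg t
    have hf1 : f < 1 := Int.fract_lt_one t
    have hf'0 : 0 ≤ f' := by
      rcases eq_or_lt_of_le hf0 with h | h
      · have : SignType.sign f' = 0 := by rw [hbd0, ← h, sign_zero]
        rw [sign_eq_zero_iff.mp this]
      · have : SignType.sign f' = 1 := by rw [hbd0, sign_pos h]
        exact le_of_lt (sign_eq_one_iff.mp this)
    have hf'1 : f' < 1 := by
      have : SignType.sign (f' - 1) = -1 := by
        rw [hbd1, sign_neg (by linarith : f - 1 < 0)]
      have := sign_eq_neg_one_iff.mp this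
      linarith
    set t' : ℝ := (⌊t⌋ : ℝ) + f' with ht'def
    have hft' : Int.fract t' = f' := by
      rw [ht'def, Int.fract_intCast_add, Int.fract_eq_self.mpr ⟨hf'0, hf'1⟩]
    have hflt' : ⌊t'⌋ = ⌊t⌋ := by
      rw [ht'def, Int.floor_intCast_add,
        Int.floor_eq_zero_iff.mpr (Set.mem_Ico.mpr ⟨hf'0, hf'1⟩), add_zero]
    refine ⟨t', ?_⟩
    have hfra_elim : ∀ (w : ι → ℝ) (c : ℝ),
        fra (Sum.elim w (fun _ : Unit => c)) = Sum.elim (fra w) (fun _ : Unit => Int.fract c) := by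
      intro w c; funext i; cases i <;> rfl
    have hfloors : ∀ i, ⌊(Sum.elim z (fun _ : Unit => t')) i⌋ = ⌊(Sum.elim y (fun _ : Unit => t)) i⌋ := by
      intro i
      cases i with
      | inl i => exact (hfl i).symm
      | inr _ => simp only [Sum.elim_inr]; rw [hflt']
    have hsigns : ∀ P ∈ H,
        SignType.sign (dt P.1 (fra (Sum.elim z (fun _ : Unit => t'))) - P.2) =
        SignType.sign (dt P.1 (fra (Sum.elim y (fun _ : Unit => t))) - P.2) := by
      intro P hP
      rw [hfra_elim, hfra_elim, dt_sumElim, dt_sumElim, hft']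
      have hPG : tri P ∈ G := Finset.mem_image_of_mem _
        (Finset.mem_insert_of_mem (Finset.mem_insert_of_mem hP))
      exact hf' (tri P) hPG
    exact (hH (Sum.elim z (fun _ : Unit => t')) (Sum.elim y (fun _ : Unit => t)) hfloors hsigns).mpr ht
  intro y z hfl hsg
  constructor
  · exact fun h => key y z hfl hsg h
  · exact fun h => key z y (fun i => (hfl i).symm) (fun p hp => (hsg p hp).symm) h

lemma floor_frac_split {ι : Type} [Fintype ι] (c : ι → ℤ) (w : ι → ℝ) :
    dt (fun i => (c i : ℝ)) w
      = ((∑ i, c i * ⌊w i⌋ : ℤ) : ℝ) + dt (fun i => (c i : ℝ)) (fra w) := by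
  rw [dt, dt]
  push_cast
  rw [← Finset.sum_add_distrib]
  apply Finset.sum_congr rfl
  intro i _
  have h : (fra w) i = w i - (⌊w i⌋ : ℝ) := rfl
  rw [h]
  ring

lemma abs_dt_fra_le {ι : Type} [Fintype ι] (c : ι → ℤ) (w : ι → ℝ) :
    |dt (fun i => (c i : ℝ)) (fra w)| ≤ ((∑ i, |c i| : ℤ) : ℝ) := by
  calc |dt (fun i => (c i : ℝ)) (fra w)| ≤ ∑ i, |(c i : ℝ) * (fra w) i| :=
        Finset.abs_sum_le_sum_abs _ _
    _ ≤ ∑ i, |(c i : ℝ)| := by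
        apply Finset.sum_le_sum
        intro i _
        rw [abs_mul]
        have h1 : |(fra w) i| ≤ 1 := by
          have h2 : (0:ℝ) ≤ (fra w) i := Int.fract_nonneg _
          have h3 : (fra w) i < 1 := Int.fract_lt_one _
          rw [abs_of_nonneg h2]
          linarith
        calc |(c i : ℝ)| * |(fra w) i| ≤ |(c i : ℝ)| * 1 :=
              mul_le_mul_of_nonneg_left h1 (abs_nonneg _)
          _ = |(c i : ℝ)| := mul_one _
    _ = ((∑ i, |c i| : ℤ) : ℝ) := by push_cast; rfl

lemma nice_linear_eq {ι : Type} [Fintype ι] (c : ι → ℤ) :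
    Nice {w : ι → ℝ | dt (fun i => (c i : ℝ)) w = 0} := by
  classical
  set M : ℤ := (∑ i, |c i|) + 1 with hMdef
  refine ⟨(Finset.Icc (-M) M).image fun κ : ℤ => ((fun i => (c i : ℝ)), (κ : ℝ)), ?_⟩
  intro y z hfl hsg
  have hK : (∑ i, c i * ⌊y i⌋) = (∑ i, c i * ⌊z i⌋) :=
    Finset.sum_congr rfl (fun i _ => by rw [hfl i])
  set K : ℤ := ∑ i, c i * ⌊y i⌋ with hKdef
  have hy : dt (fun i => (c i : ℝ)) y = (K : ℝ) + dt (fun i => (c i : ℝ)) (fra y) :=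
    floor_frac_split c y
  have hz : dt (fun i => (c i : ℝ)) z = (K : ℝ) + dt (fun i => (c i : ℝ)) (fra z) := by
    rw [floor_frac_split c z, ← hK]
  by_cases hM : |K| ≤ M
  · have hmem : ((fun i => (c i : ℝ)), ((-K : ℤ) : ℝ)) ∈
        (Finset.Icc (-M) M).image (fun κ : ℤ => ((fun i => (c i : ℝ)), (κ : ℝ))) := by
      apply Finset.mem_image_of_mem
      rw [Finset.mem_Icc]
      constructor
      · linarith [(abs_le.mp hM).2]
      · linarith [(abs_le.mp hM).1]
    have hs := hsg _ hmem
    simp only at hs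
    have h1 := sign_zero_iff_of_eq hs
    simp only [Set.mem_setOf_eq]
    rw [hy, hz]
    push_cast at h1 ⊢
    constructor
    · intro h; linarith [h1.mp (by linarith)]
    · intro h; linarith [h1.mpr (by linarith)]
  · push_neg at hM
    have hb1 := abs_dt_fra_le c y
    have hb2 := abs_dt_fra_le c z
    have hMK : ((∑ i, |c i| : ℤ) : ℝ) < |(K : ℝ)| := by
      have h9 : M ≤ |K| := hM.le
      rw [hMdef] at h9
      have : ((∑ i, |c i| : ℤ) : ℝ) + 1 ≤ |(K:ℝ)| := by
        rw [← Int.cast_abs]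
        exact_mod_cast h9
      linarith
    simp only [Set.mem_setOf_eq]
    rw [hy, hz]
    constructor
    · intro h
      exfalso
      have : |(K:ℝ)| ≤ ((∑ i, |c i| : ℤ) : ℝ) := by
        have h2 : (K:ℝ) = -dt (fun i => (c i : ℝ)) (fra y) := by linarith
        rw [h2, abs_neg]
        exact hb1
      linarith
    · intro h
      exfalso
      have : |(K:ℝ)| ≤ ((∑ i, |c i| : ℤ) : ℝ) := by
        have h2 : (K:ℝ) = -dt (fun i => (c i : ℝ)) (fra z) := by linarith
        rw [h2, abs_neg]
        exact hb2
      linarith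

lemma nice_linear_lt {ι : Type} [Fintype ι] (c : ι → ℤ) :
    Nice {w : ι → ℝ | dt (fun i => (c i : ℝ)) w < 0} := by
  classical
  set M : ℤ := (∑ i, |c i|) + 1 with hMdef
  refine ⟨(Finset.Icc (-M) M).image fun κ : ℤ => ((fun i => (c i : ℝ)), (κ : ℝ)), ?_⟩
  intro y z hfl hsg
  have hK : (∑ i, c i * ⌊y i⌋) = (∑ i, c i * ⌊z i⌋) :=
    Finset.sum_congr rfl (fun i _ => by rw [hfl i])
  set K : ℤ := ∑ i, c i * ⌊y i⌋ with hKdef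
  have hy : dt (fun i => (c i : ℝ)) y = (K : ℝ) + dt (fun i => (c i : ℝ)) (fra y) :=
    floor_frac_split c y
  have hz : dt (fun i => (c i : ℝ)) z = (K : ℝ) + dt (fun i => (c i : ℝ)) (fra z) := by
    rw [floor_frac_split c z, ← hK]
  have hb1 := abs_dt_fra_le c y
  have hb2 := abs_dt_fra_le c z
  simp only [Set.mem_setOf_eq]
  rw [hy, hz]
  by_cases hM : |K| ≤ M
  · have hmem : ((fun i => (c i : ℝ)), ((-K : ℤ) : ℝ)) ∈
        (Finset.Icc (-M) M).image (fun κ : ℤ => ((fun i => (c i : ℝ)), (κ : ℝ))) := by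
      apply Finset.mem_image_of_mem
      rw [Finset.mem_Icc]
      constructor
      · linarith [(abs_le.mp hM).2]
      · linarith [(abs_le.mp hM).1]
    have hs := hsg _ hmem
    simp only at hs
    have h1 := sign_lt_iff_of_eq hs
    push_cast at h1 ⊢
    constructor
    · intro h; linarith [h1.mp (by linarith)]
    · intro h; linarith [h1.mpr (by linarith)]
  · push_neg at hM
    have hMK : ((∑ i, |c i| : ℤ) : ℝ) + 1 ≤ |(K : ℝ)| := by
      have h9 : M ≤ |K| := hM.le
      rw [hMdef] at h9
      rw [← Int.cast_abs]
      exact_mod_cast h9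
    rcases le_or_gt 0 (K:ℝ) with h0 | h0
    · rw [abs_of_nonneg h0] at hMK
      constructor
      · intro h; exfalso; linarith [neg_abs_le (dt (fun i => (c i : ℝ)) (fra y)), abs_nonneg (dt (fun i => (c i : ℝ)) (fra y))]
      · intro h; exfalso; linarith [neg_abs_le (dt (fun i => (c i : ℝ)) (fra z))]
    · rw [abs_of_neg h0] at hMK
      constructor
      · intro _; linarith [le_abs_self (dt (fun i => (c i : ℝ)) (fra z))]
      · intro _; linarith [le_abs_self (dt (fun i => (c i : ℝ)) (fra y))]

lemma nice_linear_int {ι : Type} [Fintype ι] (m : ι → ℕ) :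
    Nice {w : ι → ℝ | ∃ κ : ℤ, dt (fun i => (m i : ℝ)) w = (κ : ℝ)} := by
  classical
  set c : ι → ℤ := fun i => (m i : ℤ) with hcdef
  have hcast : (fun i => ((c i : ℤ) : ℝ)) = fun i => (m i : ℝ) := by
    funext i; rw [hcdef]; push_cast; rfl
  set M : ℤ := ∑ i, (m i : ℤ) with hMdef
  refine ⟨(Finset.Icc (0:ℤ) M).image fun κ : ℤ => ((fun i => (m i : ℝ)), (κ : ℝ)), ?_⟩
  intro y z hfl hsg
  have hK : (∑ i, c i * ⌊y i⌋) = (∑ i, c i * ⌊z i⌋) :=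
    Finset.sum_congr rfl (fun i _ => by rw [hfl i])
  set K : ℤ := ∑ i, c i * ⌊y i⌋ with hKdef
  have hsplit : ∀ w : ι → ℝ, dt (fun i => (m i : ℝ)) w
      = ((∑ i, c i * ⌊w i⌋ : ℤ) : ℝ) + dt (fun i => (m i : ℝ)) (fra w) := by
    intro w
    have := floor_frac_split c w
    rwa [hcast] at this
  have hfr_bounds : ∀ w : ι → ℝ, 0 ≤ dt (fun i => (m i : ℝ)) (fra w) ∧
      dt (fun i => (m i : ℝ)) (fra w) ≤ (M : ℝ) := by
    intro w
    constructor
    · apply Finset.sum_nonneg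
      intro i _
      have := Int.fract_nonneg (w i)
      positivity
    · rw [hMdef]
      push_cast
      apply Finset.sum_le_sum
      intro i _
      have h1 := Int.fract_lt_one (w i)
      have h2 := Int.fract_nonneg (w i)
      calc (m i : ℝ) * (fra w) i ≤ (m i : ℝ) * 1 := by
            apply mul_le_mul_of_nonneg_left _ (by positivity)
            show Int.fract (w i) ≤ 1
            linarith
        _ = (m i : ℝ) := mul_one _
  have hchar : ∀ w : ι → ℝ, (∀ i, ⌊w i⌋ = ⌊y i⌋) →
      ((∃ κ : ℤ, dt (fun i => (m i : ℝ)) w = (κ : ℝ)) ↔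
       (∃ κ' ∈ Finset.Icc (0:ℤ) M, dt (fun i => (m i : ℝ)) (fra w) = (κ' : ℝ))) := by
    intro w hw
    have hKw : (∑ i, c i * ⌊w i⌋) = K :=
      Finset.sum_congr rfl (fun i _ => by rw [hw i])
    constructor
    · rintro ⟨κ, hκ⟩
      rw [hsplit w, hKw] at hκ
      refine ⟨κ - K, ?_, ?_⟩
      · rw [Finset.mem_Icc]
        have h1 := (hfr_bounds w).1
        have h2 := (hfr_bounds w).2
        have h3 : dt (fun i => (m i : ℝ)) (fra w) = ((κ - K : ℤ) : ℝ) := by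
          push_cast
          linarith
        constructor
        · exact_mod_cast h3 ▸ h1
        · exact_mod_cast h3 ▸ h2
      · push_cast
        linarith
    · rintro ⟨κ', _, hκ'⟩
      refine ⟨K + κ', ?_⟩
      rw [hsplit w, hKw, hκ']
      push_cast
      ring
  rw [Set.mem_setOf_eq, Set.mem_setOf_eq, hchar y (fun _ => rfl),
    hchar z (fun i => (hfl i).symm)]
  constructor
  · rintro ⟨κ', hκ'm, hκ'⟩
    refine ⟨κ', hκ'm, ?_⟩
    have hs := hsg _ (Finset.mem_image_of_mem _ hκ'm)
    simp only at hs
    have := sign_zero_iff_of_eq hs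
    have h0 : dt (fun i => (m i : ℝ)) (fra y) - (κ' : ℝ) = 0 := by linarith
    linarith [this.mp h0]
  · rintro ⟨κ', hκ'm, hκ'⟩
    refine ⟨κ', hκ'm, ?_⟩
    have hs := hsg _ (Finset.mem_image_of_mem _ hκ'm)
    simp only at hs
    have := sign_zero_iff_of_eq hs
    have h0 : dt (fun i => (m i : ℝ)) (fra z) - (κ' : ℝ) = 0 := by linarith
    linarith [this.mpr h0]

set_option maxHeartbeats 1000000 in
theorem nice_locallyConic {ι : Type} [Fintype ι] {X : Set (ι → ℝ)} (hX : Nice X)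
    (x : ι → ℝ) : LocallyConic X x := by
  classical
  obtain ⟨H, hH⟩ := hX
  set pat : Finset (ι → ℤ) :=
    Finset.univ.powerset.image
      (fun S : Finset ι => fun i => if i ∈ S then ⌊x i⌋ - 1 else ⌊x i⌋) with hpatdef
  set κf : (((ι → ℝ) × ℝ) × (ι → ℤ)) → ℝ :=
    fun q => dt q.1.1 x - dt q.1.1 (fun i => ((q.2 i : ℤ) : ℝ)) - q.1.2 with hκfdef
  set Sa : (ι → ℝ) × ℝ → ℝ := fun p => ∑ i, |p.1 i| with hSadef
  set T : Finset ℝ :=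
    insert (1/2)
      ((((Finset.univ.filter fun i => Int.fract (x i) ≠ 0)).image fun i => Int.fract (x i)) ∪
       (((Finset.univ.filter fun i => Int.fract (x i) ≠ 0)).image fun i => 1 - Int.fract (x i)) ∪
       (((H ×ˢ pat).filter fun q => κf q ≠ 0).image fun q => |κf q| / (Sa q.1 + 1))) with hTdef
  have hTne : T.Nonempty := ⟨1/2, Finset.mem_insert_self _ _⟩
  set ρ : ℝ := T.min' hTne with hρdef
  have hSa_nonneg : ∀ p, 0 ≤ Sa p := by
    intro p
    apply Finset.sum_nonneg
    intro i _
    exact abs_nonneg _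
  have hρpos : 0 < ρ := by
    rw [hρdef, Finset.lt_min'_iff]
    intro t ht
    rw [hTdef] at ht
    rcases Finset.mem_insert.mp ht with h | h
    · rw [h]; norm_num
    · rcases Finset.mem_union.mp h with h | h
      · rcases Finset.mem_union.mp h with h | h
        · obtain ⟨i, hi, rfl⟩ := Finset.mem_image.mp h
          have := (Finset.mem_filter.mp hi).2
          exact lt_of_le_of_ne (Int.fract_nonneg _) (Ne.symm this)
        · obtain ⟨i, hi, rfl⟩ := Finset.mem_image.mp h
          have := Int.fract_lt_one (x i)
          linarith
      · obtain ⟨q, hq, rfl⟩ := Finset.mem_image.mp h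
        have hκ := (Finset.mem_filter.mp hq).2
        have h1 : 0 < |κf q| := abs_pos.mpr hκ
        have h2 : 0 < Sa q.1 + 1 := by linarith [hSa_nonneg q.1]
        positivity
  have hρle : ∀ t ∈ T, ρ ≤ t := fun t ht => Finset.min'_le _ _ ht
  have hρhalf : ρ ≤ 1/2 := hρle _ (Finset.mem_insert_self _ _)
  set J : Finset (ι → ℝ) := (Finset.univ.filter fun i => Int.fract (x i) = 0).image
      (fun i => Pi.single i (1:ℝ)) ∪ H.image Prod.fst with hJdef
  refine ⟨ρ, hρpos, J, ?_⟩
  intro y hy z hz hsign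
  rw [Metric.mem_ball] at hy hz
  have hyc : ∀ i, |y i - x i| < ρ := by
    intro i
    have := dist_le_pi_dist y x i
    rw [Real.dist_eq] at this
    linarith
  have hzc : ∀ i, |z i - x i| < ρ := by
    intro i
    have := dist_le_pi_dist z x i
    rw [Real.dist_eq] at this
    linarith
  -- single signs
  have hsign1 : ∀ i, Int.fract (x i) = 0 →
      SignType.sign (y i - x i) = SignType.sign (z i - x i) := by
    intro i hi
    have hmem : Pi.single i (1:ℝ) ∈ J := by
      rw [hJdef]
      exact Finset.mem_union_left _ (Finset.mem_image_of_mem _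
        (Finset.mem_filter.mpr ⟨Finset.mem_univ i, hi⟩))
    have := hsign _ hmem
    rwa [dt_single, dt_single, Pi.sub_apply, Pi.sub_apply] at this
  -- floors
  have hfloor : ∀ w : ι → ℝ, (∀ i, |w i - x i| < ρ) →
      ∀ i, (Int.fract (x i) = 0 → ((x i - w i ≤ 0 → ⌊w i⌋ = ⌊x i⌋) ∧
              (0 < x i - w i → ⌊w i⌋ = ⌊x i⌋ - 1))) ∧
           (Int.fract (x i) ≠ 0 → ⌊w i⌋ = ⌊x i⌋) := by
    intro w hw i
    have hwi := hw i
    have habs := abs_lt.mp hwi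
    constructor
    · intro hi
      have hxint : x i = ⌊x i⌋ := by
        have : Int.fract (x i) = x i - ⌊x i⌋ := rfl
        rw [this] at hi
        linarith
      constructor
      · intro hle
        rw [Int.floor_eq_iff]
        constructor
        · push_cast; linarith
        · push_cast; linarith
      · intro hlt
        rw [Int.floor_eq_iff]
        constructor
        · push_cast; linarith
        · push_cast; linarith
    · intro hi
      have h1 : ρ ≤ Int.fract (x i) := by
        apply hρle
        rw [hTdef]
        apply Finset.mem_insert_of_mem
        apply Finset.mem_union_left
        apply Finset.mem_union_left
        exact Finset.mem_image_of_mem _ (Finset.mem_filter.mpr ⟨Finset.mem_univ i, hi⟩)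
      have h2 : ρ ≤ 1 - Int.fract (x i) := by
        apply hρle
        rw [hTdef]
        apply Finset.mem_insert_of_mem
        apply Finset.mem_union_left
        apply Finset.mem_union_right
        exact Finset.mem_image_of_mem _ (Finset.mem_filter.mpr ⟨Finset.mem_univ i, hi⟩)
      have hfr : Int.fract (x i) = x i - ⌊x i⌋ := rfl
      rw [Int.floor_eq_iff]
      constructor
      · push_cast; rw [hfr] at h1; linarith
      · push_cast; rw [hfr] at h2; linarith
  have hfyz : ∀ i, ⌊y i⌋ = ⌊z i⌋ := by
    intro i
    rcases eq_or_ne (Int.fract (x i)) 0 with hi | hi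
    · have h1 := ((hfloor y hyc i).1 hi)
      have h2 := ((hfloor z hzc i).1 hi)
      have hs := hsign1 i hi
      rcases le_or_gt (x i - y i) 0 with hy1 | hy1
      · rcases le_or_gt (x i - z i) 0 with hz1 | hz1
        · rw [h1.1 hy1, h2.1 hz1]
        · exfalso
          rw [sign_neg (by linarith : z i - x i < 0)] at hs
          rcases eq_or_lt_of_le (by linarith : (0:ℝ) ≤ y i - x i) with h | h
          · rw [← h, sign_zero] at hs; exact absurd hs (by decide)
          · rw [sign_pos h] at hs; exact absurd hs (by decide)
      · rcases le_or_gt (x i - z i) 0 with hz1 | hz1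
        · exfalso
          rw [sign_neg (by linarith : y i - x i < 0)] at hs
          rcases eq_or_lt_of_le (by linarith : (0:ℝ) ≤ z i - x i) with h | h
          · rw [← h, sign_zero] at hs; exact absurd hs (by decide)
          · rw [sign_pos h] at hs; exact absurd hs (by decide)
        · rw [h1.2 hy1, h2.2 hz1]
    · rw [(hfloor y hyc i).2 hi, (hfloor z hzc i).2 hi]
  -- floor vector belongs to the patterns
  have hfy_pat : (fun i => ⌊y i⌋) ∈ pat := by
    rw [hpatdef]
    apply Finset.mem_image.mpr
    refine ⟨Finset.univ.filter (fun i => ⌊y i⌋ ≠ ⌊x i⌋), Finset.mem_powerset.mpr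
      (Finset.filter_subset _ _), ?_⟩
    funext i
    by_cases hne : ⌊y i⌋ = ⌊x i⌋
    · rw [if_neg (by simp [hne])]
      exact hne.symm
    · rw [if_pos (Finset.mem_filter.mpr ⟨Finset.mem_univ i, hne⟩)]
      symm
      rcases eq_or_ne (Int.fract (x i)) 0 with hi | hi
      · have h1 := ((hfloor y hyc i).1 hi)
        rcases le_or_gt (x i - y i) 0 with hy1 | hy1
        · exact absurd (h1.1 hy1) hne
        · exact h1.2 hy1
      · exact absurd ((hfloor y hyc i).2 hi) hne
  -- fractional sign conditions
  have hfrsign : ∀ p ∈ H, SignType.sign (dt p.1 (fra y) - p.2) =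
      SignType.sign (dt p.1 (fra z) - p.2) := by
    intro p hp
    have hfra : ∀ w : ι → ℝ, fra w = w - (fun i => ((⌊w i⌋ : ℤ) : ℝ)) := by
      intro w; funext i; rfl
    set q : (((ι → ℝ) × ℝ) × (ι → ℤ)) := (p, fun i => ⌊y i⌋) with hqdef
    have hqmem : q ∈ H ×ˢ pat := Finset.mem_product.mpr ⟨hp, hfy_pat⟩
    have hκval : ∀ w : ι → ℝ, (∀ i, ⌊w i⌋ = ⌊y i⌋) →
        dt p.1 (fra w) - p.2 = κf q + dt p.1 (w - x) := by
      intro w hw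
      rw [hfra, dt_sub, hκfdef, hqdef]
      simp only
      have : (fun i => ((⌊w i⌋ : ℤ) : ℝ)) = (fun i => ((⌊y i⌋ : ℤ) : ℝ)) := by
        funext i; rw [hw i]
      rw [this, dt_sub]
      ring
    have hκy := hκval y (fun _ => rfl)
    have hκz := hκval z (fun i => (hfyz i).symm)
    rcases eq_or_ne (κf q) 0 with hκ0 | hκ0
    · rw [hκy, hκz, hκ0, zero_add, zero_add]
      exact hsign _ (Finset.mem_union_right _ (Finset.mem_image_of_mem _ hp))
    · have hρκ : ρ ≤ |κf q| / (Sa p + 1) := by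
        apply hρle
        rw [hTdef]
        apply Finset.mem_insert_of_mem
        apply Finset.mem_union_right
        apply Finset.mem_image.mpr
        exact ⟨q, Finset.mem_filter.mpr ⟨hqmem, hκ0⟩, rfl⟩
      have hbound : ∀ w : ι → ℝ, (∀ i, |w i - x i| < ρ) → |dt p.1 (w - x)| < |κf q| := by
        intro w hw
        have h1 : |dt p.1 (w - x)| ≤ Sa p * ρ := by
          rw [hSadef]
          exact abs_dt_le _ _ ρ (fun i => le_of_lt (hw i))
        have h2 : Sa p * ρ ≤ Sa p * (|κf q| / (Sa p + 1)) :=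
          mul_le_mul_of_nonneg_left hρκ (hSa_nonneg p)
        have h3 : Sa p * (|κf q| / (Sa p + 1)) < |κf q| := by
          rw [div_eq_inv_mul, ← mul_assoc]
          have h4 : Sa p * (Sa p + 1)⁻¹ < 1 := by
            rw [mul_inv_lt_iff₀ (by linarith [hSa_nonneg p])]
            linarith [hSa_nonneg p]
          have h5 : 0 < |κf q| := abs_pos.mpr hκ0
          nlinarith
        linarith
      rw [hκy, hκz, sign_add_of_abs_lt (hbound y hyc), sign_add_of_abs_lt (hbound z hzc)]
  exact hH y z hfyz hfrsign

set_option maxHeartbeats 1000000 in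
theorem geom {ι : Type} [Fintype ι] {X : Set (ι → ℝ)} {x : ι → ℝ}
    (hC : LocallyConic X x) (hsing : IsSingular X x) :
    ∀ r > (0:ℝ), ∃ s > (0:ℝ), ∀ v : ι → ℝ, v ≠ 0 → ‖v‖ < s →
      ∃ y ∈ Metric.ball x r, ∃ z ∈ Metric.ball x r, y = z + v ∧ (y ∈ X ↔ z ∉ X) := by
  intro r hr
  obtain ⟨ρ, hρ, J, hdet⟩ := hC
  set ρ₁ := min ρ r with hρ₁def
  have hρ₁ : 0 < ρ₁ := lt_min hρ hr
  set N := J.card with hN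
  refine ⟨ρ₁ / (16 * (N + 1)), by positivity, ?_⟩
  intro v hv0 hvs
  by_contra hno
  push_neg at hno
  have hball_sub_r : Metric.ball x ρ₁ ⊆ Metric.ball x r :=
    Metric.ball_subset_ball (min_le_right _ _)
  have hball_sub_ρ : Metric.ball x ρ₁ ⊆ Metric.ball x ρ :=
    Metric.ball_subset_ball (min_le_left _ _)
  have hper : ∀ w, w ∈ Metric.ball x ρ₁ → w + v ∈ Metric.ball x ρ₁ →
      ((w + v ∈ X) ↔ w ∈ X) := by
    intro w hw hwv
    have h1 := hno (w + v) (hball_sub_r hwv) w (hball_sub_r hw) rfl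
    tauto
  have hN0 : (0:ℝ) ≤ (N:ℝ) := Nat.cast_nonneg N
  have hstr : IsStratum X x v := by
    refine ⟨ρ₁ / 8, by positivity, ?_⟩
    rintro y hy ⟨z, ⟨hzX, hz⟩, α, rfl⟩
    by_contra hyX
    rw [Metric.mem_ball] at hy hz
    set m : ℤ := ⌊α⌋ with hmdef
    set β : ℝ := α - m with hβdef
    have hβ0 : 0 ≤ β := by
      have := Int.floor_le α; simp [hβdef]; linarith
    have hβ1 : β < 1 := by
      have := Int.lt_floor_add_one α; simp [hβdef]; linarith
    set z' : ι → ℝ := z + (m : ℝ) • v with hz'def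
    have hy_eq : z + α • v = z' + β • v := by
      rw [hz'def, hβdef]; module
    have hvpos : 0 < ‖v‖ := norm_pos_iff.mpr hv0
    have hαv : ‖α • v‖ ≤ ρ₁ / 4 := by
      have h1 : ‖α • v‖ = dist (z + α • v) z := by
        rw [dist_eq_norm]; congr 1; abel
      rw [h1]
      calc dist (z + α • v) z ≤ dist (z + α • v) x + dist x z := dist_triangle _ _ _
        _ ≤ ρ₁/8 + ρ₁/8 := by
            have hzx := dist_comm x z
            linarith [hy, hz, dist_comm z x]
        _ = ρ₁/4 := by ring
    have hαnv : |α| * ‖v‖ ≤ ρ₁ / 4 := by rwa [norm_smul, Real.norm_eq_abs] at hαv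
    have hm_le : |(m : ℝ)| ≤ |α| + 1 := by
      have h1 := Int.floor_le α
      have h2 := Int.lt_floor_add_one α
      rw [abs_le]
      constructor
      · have := neg_abs_le α; linarith
      · have := le_abs_self α; linarith
    have hNv : (2 * (N : ℝ) + 3) * ‖v‖ ≤ 3 * ρ₁ / 16 := by
      have h1 : (2 * (N : ℝ) + 3) ≤ 3 * ((N : ℝ) + 1) := by linarith
      have h2 : (2 * (N : ℝ) + 3) * ‖v‖ ≤ 3 * ((N : ℝ) + 1) * ‖v‖ :=
        mul_le_mul_of_nonneg_right h1 (norm_nonneg v)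
      have h3 : 3 * ((N : ℝ) + 1) * ‖v‖ ≤ 3 * ((N : ℝ) + 1) * (ρ₁ / (16 * (N + 1))) :=
        mul_le_mul_of_nonneg_left (le_of_lt hvs) (by positivity)
      have h4 : 3 * ((N : ℝ) + 1) * (ρ₁ / (16 * (N + 1))) = 3 * ρ₁ / 16 := by
        field_simp
      linarith
    have hpt : ∀ t : ℝ, |t| ≤ |(m : ℝ)| + 2 * N + 2 → z + t • v ∈ Metric.ball x ρ₁ := by
      intro t ht
      rw [Metric.mem_ball]
      have h1 : dist (z + t • v) x ≤ ‖t • v‖ + dist z x := by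
        calc dist (z + t • v) x ≤ dist (z + t • v) z + dist z x := dist_triangle _ _ _
          _ = ‖t • v‖ + dist z x := by
              congr 1; rw [dist_eq_norm]; congr 1; abel
      have h2 : ‖t • v‖ ≤ (|α| + 2 * N + 3) * ‖v‖ := by
        rw [norm_smul, Real.norm_eq_abs]
        apply mul_le_mul_of_nonneg_right _ (norm_nonneg v)
        linarith
      have h3 : (|α| + 2 * N + 3) * ‖v‖ = |α| * ‖v‖ + (2 * N + 3) * ‖v‖ := by ring
      have h5 : dist (z + t • v) x ≤ ρ₁/4 + 3 * ρ₁/16 + ρ₁/8 := by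
        rw [h3] at h2
        linarith
      linarith
    have habs_bound : ∀ c : ℝ, 0 ≤ c → c ≤ 2 * (N:ℝ) + 2 →
        |(m:ℝ) + c| ≤ |(m:ℝ)| + 2 * N + 2 := by
      intro c h0 h2
      calc |(m:ℝ) + c| ≤ |(m:ℝ)| + |c| := abs_add_le _ _
        _ ≤ |(m:ℝ)| + 2 * N + 2 := by rw [abs_of_nonneg h0]; linarith
    have hchain : ∀ (c : ℝ) (k : ℕ),
        (∀ j : ℕ, j ≤ k → z + (c + j) • v ∈ Metric.ball x ρ₁) →
        ((z + (c + k) • v ∈ X) ↔ z + c • v ∈ X) := by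
      intro c k
      induction k with
      | zero => intro _; norm_num
      | succ k ih =>
        intro hb
        have e1 : z + (c + (k + 1 : ℕ)) • v = (z + (c + k) • v) + v := by
          push_cast; module
        rw [e1, hper _ (hb k (Nat.le_succ k)) (by rw [← e1]; exact hb (k+1) le_rfl)]
        exact ih (fun j hj => hb j (hj.trans (Nat.le_succ k)))
    -- z' ∈ X
    have hz'X : z' ∈ X := by
      rcases le_or_gt 0 (m:ℝ) with hm0 | hm0
      · have hm0' : (0:ℤ) ≤ m := by exact_mod_cast hm0
        have hmnat : ((m.toNat : ℕ) : ℝ) = (m : ℝ) := by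
          norm_cast; omega
        have hc := hchain 0 m.toNat (fun j hj => by
          apply hpt
          have hj' : (j:ℝ) ≤ (m:ℝ) := by rw [← hmnat]; exact_mod_cast hj
          rw [show (0:ℝ) + (j:ℝ) = (j:ℝ) by ring, abs_of_nonneg (Nat.cast_nonneg j)]
          linarith [le_abs_self (m:ℝ)])
        have e5 : z + ((0:ℝ) + ((m.toNat : ℕ) : ℝ)) • v = z' := by
          rw [hmnat, hz'def]; module
        have e6 : z + (0:ℝ) • v = z := by simp
        rw [e5, e6] at hc
        exact hc.mpr hzX
      · have hm0' : m < 0 := by exact_mod_cast hm0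
        have hmnat : (((-m).toNat : ℕ) : ℝ) = -(m : ℝ) := by
          norm_cast; omega
        have hc := hchain (m:ℝ) (-m).toNat (fun j hj => by
          apply hpt
          have hj' : (j:ℝ) ≤ -(m:ℝ) := by rw [← hmnat]; exact_mod_cast hj
          rw [abs_le]
          constructor
          · linarith [neg_abs_le (m:ℝ), Nat.cast_nonneg (α := ℝ) j]
          · linarith [abs_nonneg (m:ℝ)])
        have e7 : z + ((m:ℝ) + (((-m).toNat : ℕ) : ℝ)) • v = z := by
          rw [hmnat]; module
        rw [e7, ← hz'def] at hc
        exact hc.mp hzX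
    -- translated pairs
    have hPt : ∀ k : ℕ, k ≤ 2 * N → ((z' + (k : ℝ) • v ∈ X) ↔ z' ∈ X) := by
      intro k hk
      have hc := hchain (m:ℝ) k (fun j hj => by
        apply hpt
        have hj' : (j:ℝ) ≤ 2*(N:ℝ) := by exact_mod_cast hj.trans hk
        exact habs_bound j (Nat.cast_nonneg j) (by linarith))
      have e4k : z + ((m:ℝ) + (k:ℝ)) • v = z' + (k:ℝ) • v := by
        rw [hz'def]; module
      rw [e4k, ← hz'def] at hc
      exact hc
    have hQt : ∀ k : ℕ, k ≤ 2 * N → ((z' + (β + k) • v ∈ X) ↔ z' + β • v ∈ X) := by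
      intro k hk
      have hc := hchain ((m:ℝ) + β) k (fun j hj => by
        have e8 : z + ((m:ℝ) + β + (j:ℝ)) • v = z + ((m:ℝ) + (β + (j:ℝ))) • v := by
          rw [show (m:ℝ) + β + (j:ℝ) = (m:ℝ) + (β + (j:ℝ)) by ring]
        rw [e8]
        apply hpt
        have hj' : (j:ℝ) ≤ 2*(N:ℝ) := by exact_mod_cast hj.trans hk
        exact habs_bound (β + j) (by linarith [Nat.cast_nonneg (α := ℝ) j])
          (by linarith [Nat.cast_nonneg (α := ℝ) j]))
      have e3k : z + (((m:ℝ) + β) + (k:ℝ)) • v = z' + (β + (k:ℝ)) • v := by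
        rw [hz'def]; module
      have e30 : z + ((m:ℝ) + β) • v = z' + β • v := by
        rw [hz'def]; module
      rw [e3k, e30] at hc
      exact hc
    have hβpos : 0 < β := by
      rcases eq_or_lt_of_le hβ0 with h | h
      · exfalso
        apply hyX
        rw [hy_eq, ← h]
        simpa using hz'X
      · exact h
    have hyX' : z' + β • v ∉ X := by rw [← hy_eq]; exact hyX
    -- witnesses
    have hwit : ∀ i : Fin (N + 1), ∃ a ∈ J,
        SignType.sign (dt a ((z' + (β + ((2 * (i:ℕ) : ℕ) : ℝ)) • v) - x)) ≠
        SignType.sign (dt a ((z' + ((2 * (i:ℕ) : ℕ) : ℝ) • v) - x)) := by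
      intro i
      by_contra hcon
      push_neg at hcon
      have hk : 2 * (i:ℕ) ≤ 2 * N := by have := i.2; omega
      have hkr : ((2 * (i:ℕ) : ℕ) : ℝ) ≤ 2 * (N:ℝ) := by exact_mod_cast hk
      have hk0 : (0:ℝ) ≤ ((2 * (i:ℕ) : ℕ) : ℝ) := Nat.cast_nonneg _
      have hPball : z' + ((2 * (i:ℕ) : ℕ) : ℝ) • v ∈ Metric.ball x ρ₁ := by
        have e9 : z' + ((2 * (i:ℕ) : ℕ) : ℝ) • v = z + ((m:ℝ) + ((2 * (i:ℕ) : ℕ) : ℝ)) • v := by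
          rw [hz'def]; module
        rw [e9]
        exact hpt _ (habs_bound _ hk0 (by linarith))
      have hQball : z' + (β + ((2 * (i:ℕ) : ℕ) : ℝ)) • v ∈ Metric.ball x ρ₁ := by
        have e9 : z' + (β + ((2 * (i:ℕ) : ℕ) : ℝ)) • v
            = z + ((m:ℝ) + (β + ((2 * (i:ℕ) : ℕ) : ℝ))) • v := by
          rw [hz'def]; module
        rw [e9]
        exact hpt _ (habs_bound _ (by linarith) (by linarith))
      have hiff := hdet _ (hball_sub_ρ hQball) _ (hball_sub_ρ hPball) hcon
      have hP : z' + ((2 * (i:ℕ) : ℕ) : ℝ) • v ∈ X := (hPt _ hk).mpr hz'X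
      have hQ : z' + (β + ((2 * (i:ℕ) : ℕ) : ℝ)) • v ∉ X := fun hmem =>
        hyX' ((hQt _ hk).mp hmem)
      exact hQ (hiff.mpr hP)
    choose f hfJ hfne using hwit
    have hcard : J.card < (Finset.univ : Finset (Fin (N+1))).card := by
      rw [Finset.card_univ, Fintype.card_fin]; omega
    obtain ⟨i, -, i', -, hii, hff⟩ :=
      Finset.exists_ne_map_eq_of_card_lt_of_maps_to hcard (fun i _ => hfJ i)
    have hA : ∀ (a : ι → ℝ) (k : ℝ), dt a ((z' + k • v) - x) = dt a (z' - x) + k * dt a v := by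
      intro a k
      rw [show (z' + k • v) - x = (z' - x) + k • v by abel, dt_add, dt_smul]
    have hg : dt (f i) v ≠ 0 := by
      intro h0
      apply hfne i
      rw [hA, hA, h0, mul_zero, mul_zero]
    have hgpos : 0 < |dt (f i) v| := abs_pos.mpr hg
    have habs : ∀ jj : Fin (N+1), f jj = f i →
        |dt (f i) (z' - x) + ((2 * (jj:ℕ) : ℕ) : ℝ) * dt (f i) v| ≤ β * |dt (f i) v| := by
      intro jj hjb
      have hne := hfne jj
      rw [hjb] at hne
      have h1 := sign_ne_imp_abs_le hne.symm
      rw [hA, hA] at h1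
      have e : (dt (f i) (z' - x) + (β + ((2 * (jj:ℕ) : ℕ) : ℝ)) * dt (f i) v) -
          (dt (f i) (z' - x) + ((2 * (jj:ℕ) : ℕ) : ℝ) * dt (f i) v) = β * dt (f i) v := by
        ring
      rw [e, abs_mul, abs_of_nonneg hβ0] at h1
      exact h1
    have h1 := habs i rfl
    have h2 := habs i' hff.symm
    have hnat : (i:ℕ) ≠ (i':ℕ) := fun h => hii (Fin.val_injective h)
    have h3 : (1:ℝ) ≤ |((i:ℕ):ℝ) - ((i':ℕ):ℝ)| := by
      rcases Nat.lt_or_ge (i:ℕ) (i':ℕ) with h | h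
      · have h4 : ((i:ℕ):ℝ) + 1 ≤ ((i':ℕ):ℝ) := by exact_mod_cast h
        rw [abs_sub_comm, abs_of_nonneg (by linarith)]
        linarith
      · have h5 : (i':ℕ) < (i:ℕ) := lt_of_le_of_ne h (fun hh => hnat hh.symm)
        have h4 : ((i':ℕ):ℝ) + 1 ≤ ((i:ℕ):ℝ) := by exact_mod_cast h5
        rw [abs_of_nonneg (by linarith)]
        linarith
    push_cast at h1 h2
    have hd : (dt (f i) (z' - x) + 2*((i:ℕ):ℝ) * dt (f i) v) -
        (dt (f i) (z' - x) + 2*((i':ℕ):ℝ) * dt (f i) v)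
        = (2 * (((i:ℕ):ℝ) - ((i':ℕ):ℝ))) * dt (f i) v := by ring
    have h6 : 2 * |dt (f i) v| ≤
        |(dt (f i) (z' - x) + 2*((i:ℕ):ℝ) * dt (f i) v) -
         (dt (f i) (z' - x) + 2*((i':ℕ):ℝ) * dt (f i) v)| := by
      rw [hd, abs_mul, abs_mul]
      rw [abs_of_nonneg (by norm_num : (0:ℝ) ≤ 2)]
      nlinarith [abs_nonneg (dt (f i) v)]
    have h7 : |(dt (f i) (z' - x) + 2*((i:ℕ):ℝ) * dt (f i) v) -
         (dt (f i) (z' - x) + 2*((i':ℕ):ℝ) * dt (f i) v)|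
        ≤ |dt (f i) (z' - x) + 2*((i:ℕ):ℝ) * dt (f i) v| +
          |dt (f i) (z' - x) + 2*((i':ℕ):ℝ) * dt (f i) v| := by
      rw [sub_eq_add_neg]
      calc _ ≤ |dt (f i) (z' - x) + 2*((i:ℕ):ℝ) * dt (f i) v| +
            |-(dt (f i) (z' - x) + 2*((i':ℕ):ℝ) * dt (f i) v)| := abs_add_le _ _
        _ = _ := by rw [abs_neg]
    have h8 : β * |dt (f i) v| < 1 * |dt (f i) v| :=
      mul_lt_mul_of_pos_right hβ1 hgpos
    rw [one_mul] at h8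
    linarith
  exact hv0 (hsing v hstr)



lemma term_linear {γ : Type} [Fintype γ] [DecidableEq γ]
    (t : (LsLang[[(∅ : Set ℝ)]]).Term γ) :
    ∃ mq : γ → ℕ, ∀ v : γ → ℝ, t.realize v = ∑ i, (mq i : ℝ) * v i := by
  induction t with
  | var i =>
    refine ⟨fun j => if j = i then 1 else 0, fun v => ?_⟩
    rw [Term.realize_var, Finset.sum_eq_single i]
    · simp
    · intro b _ hb
      simp [hb]
    · intro h
      exact absurd (Finset.mem_univ i) h
  | @func k f ts ih =>
    rcases f with f | c
    · rcases k with _ | _ | _ | k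
      · cases f
      · cases f
      · obtain ⟨m₀, h₀⟩ := ih 0
        obtain ⟨m₁, h₁⟩ := ih 1
        refine ⟨fun j => m₀ j + m₁ j, fun v => ?_⟩
        show Structure.funMap (L := LsLang[[(∅ : Set ℝ)]]) (M := ℝ) (Sum.inl f)
            (fun i => (ts i).realize v) = _
        have hfm : (Structure.funMap (L := LsLang[[(∅ : Set ℝ)]]) (M := ℝ) (Sum.inl f)
            (fun i => (ts i).realize v)) = (ts 0).realize v + (ts 1).realize v := rfl
        rw [hfm, h₀, h₁, ← Finset.sum_add_distrib]
        apply Finset.sum_congr rfl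
        intro i _
        push_cast
        ring
      · cases f
    · rcases k with _ | k
      · obtain ⟨x, hx⟩ := c
        exact absurd hx (Set.notMem_empty x)
      · cases c

def sumFinSuccEquiv (n l : ℕ) : (Fin n ⊕ Fin (l+1)) ≃ ((Fin n ⊕ Fin l) ⊕ Unit) where
  toFun := fun x => match x with
    | .inl i => .inl (.inl i)
    | .inr j => Fin.lastCases (Sum.inr ()) (fun j₀ => Sum.inl (Sum.inr j₀)) j
  invFun := fun x => match x with
    | .inl (.inl i) => .inl i
    | .inl (.inr j₀) => .inr j₀.castSucc
    | .inr _ => .inr (Fin.last l)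
  left_inv := by
    rintro (i | j)
    · rfl
    · refine Fin.lastCases ?_ ?_ j
      · simp [Fin.lastCases_last]
      · intro j₀
        simp [Fin.lastCases_castSucc]
  right_inv := by
    rintro ((i | j₀) | u)
    · rfl
    · simp [Fin.lastCases_castSucc]
    · simp [Fin.lastCases_last]

set_option maxHeartbeats 1000000 in
theorem nice_of_boundedFormula (n : ℕ) : ∀ (l : ℕ)
    (φ : (LsLang[[(∅ : Set ℝ)]]).BoundedFormula (Fin n) l),
    Nice {w : (Fin n ⊕ Fin l) → ℝ | φ.Realize (w ∘ Sum.inl) (w ∘ Sum.inr)} := by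
  intro l φ
  induction φ with
  | falsum =>
    exact ⟨∅, fun y z _ _ => Iff.rfl⟩
  | @equal l' t₁ t₂ =>
    obtain ⟨m₁, h₁⟩ := term_linear t₁
    obtain ⟨m₂, h₂⟩ := term_linear t₂
    set c : (Fin n ⊕ Fin l') → ℤ := fun i => (m₁ i : ℤ) - (m₂ i : ℤ) with hcdef
    have hdt : ∀ w : (Fin n ⊕ Fin l') → ℝ,
        dt (fun i => (c i : ℝ)) w = t₁.realize w - t₂.realize w := by
      intro w
      rw [h₁, h₂, dt, ← Finset.sum_sub_distrib]
      apply Finset.sum_congr rfl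
      intro i _
      rw [hcdef]
      push_cast
      ring
    have hset : {w : (Fin n ⊕ Fin l') → ℝ |
        (BoundedFormula.equal t₁ t₂).Realize (w ∘ Sum.inl) (w ∘ Sum.inr)} =
        {w | dt (fun i => (c i : ℝ)) w = 0} := by
      ext w
      have helim : Sum.elim (w ∘ Sum.inl) (w ∘ Sum.inr) = w :=
        funext fun x => by cases x <;> rfl
      simp only [Set.mem_setOf_eq]
      rw [show (BoundedFormula.equal t₁ t₂).Realize (w ∘ Sum.inl) (w ∘ Sum.inr) ↔
          t₁.realize (Sum.elim (w ∘ Sum.inl) (w ∘ Sum.inr)) =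
          t₂.realize (Sum.elim (w ∘ Sum.inl) (w ∘ Sum.inr)) from Iff.rfl]
      rw [helim, hdt w]
      exact sub_eq_zero.symm
    rw [hset]
    exact nice_linear_eq c
  | @rel l' k R ts =>
    have helim : ∀ w : (Fin n ⊕ Fin l') → ℝ, Sum.elim (w ∘ Sum.inl) (w ∘ Sum.inr) = w :=
      fun w => funext fun x => by cases x <;> rfl
    rcases R with R | R
    · rcases k with _ | _ | _ | k
      · cases R
      · -- integer predicate
        obtain ⟨m, hm⟩ := term_linear (ts 0)
        have hset : {w : (Fin n ⊕ Fin l') → ℝ |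
            (BoundedFormula.rel (Sum.inl R) ts).Realize (w ∘ Sum.inl) (w ∘ Sum.inr)} =
            {w | ∃ κ : ℤ, dt (fun i => (m i : ℝ)) w = (κ : ℝ)} := by
          ext w
          simp only [Set.mem_setOf_eq]
          rw [show (BoundedFormula.rel (Sum.inl R) ts).Realize (w ∘ Sum.inl) (w ∘ Sum.inr) ↔
              (∃ κ : ℤ, (ts 0).realize (Sum.elim (w ∘ Sum.inl) (w ∘ Sum.inr)) = (κ : ℝ))
              from Iff.rfl]
          rw [helim w]
          exact exists_congr fun κ => by rw [hm]; exact Iff.rfl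
        rw [hset]
        exact nice_linear_int m
      · -- order
        obtain ⟨m₀, h₀⟩ := term_linear (ts 0)
        obtain ⟨m₁, h₁⟩ := term_linear (ts 1)
        set c : (Fin n ⊕ Fin l') → ℤ := fun i => (m₀ i : ℤ) - (m₁ i : ℤ) with hcdef
        have hdt : ∀ w : (Fin n ⊕ Fin l') → ℝ,
            dt (fun i => (c i : ℝ)) w
              = (ts 0).realize w - (ts 1).realize w := by
          intro w
          rw [h₀, h₁, dt, ← Finset.sum_sub_distrib]
          apply Finset.sum_congr rfl
          intro i _
          rw [hcdef]
          push_cast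
          ring
        have hset : {w : (Fin n ⊕ Fin l') → ℝ |
            (BoundedFormula.rel (Sum.inl R) ts).Realize (w ∘ Sum.inl) (w ∘ Sum.inr)} =
            {w | dt (fun i => (c i : ℝ)) w < 0} := by
          ext w
          simp only [Set.mem_setOf_eq]
          rw [show (BoundedFormula.rel (Sum.inl R) ts).Realize (w ∘ Sum.inl) (w ∘ Sum.inr) ↔
              ((ts 0).realize (Sum.elim (w ∘ Sum.inl) (w ∘ Sum.inr)) <
               (ts 1).realize (Sum.elim (w ∘ Sum.inl) (w ∘ Sum.inr))) from Iff.rfl]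
          rw [helim w, hdt w]
          exact sub_neg.symm
        rw [hset]
        exact nice_linear_lt c
      · cases R
    · cases k <;> cases R
  | imp φ ψ ih₁ ih₂ =>
    obtain ⟨H₁, h₁⟩ := ih₁
    obtain ⟨H₂, h₂⟩ := ih₂
    refine ⟨H₁ ∪ H₂, fun y z hf hs => ?_⟩
    have e₁ := h₁ y z hf (fun p hp => hs p (Finset.mem_union_left _ hp))
    have e₂ := h₂ y z hf (fun p hp => hs p (Finset.mem_union_right _ hp))
    exact imp_congr e₁ e₂
  | @all l' φ ih =>
    have key := nice_compl (nice_proj (nice_reindex (sumFinSuccEquiv n l').symm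
      (nice_compl ih)))
    have hset : {w : (Fin n ⊕ Fin l') → ℝ |
        (φ.all).Realize (w ∘ Sum.inl) (w ∘ Sum.inr)} =
        ({y : (Fin n ⊕ Fin l') → ℝ | ∃ t : ℝ, Sum.elim y (fun _ => t) ∈
          {w : ((Fin n ⊕ Fin l') ⊕ Unit) → ℝ |
            (w ∘ ((sumFinSuccEquiv n l').symm).symm) ∈
            {w' : (Fin n ⊕ Fin (l'+1)) → ℝ | φ.Realize (w' ∘ Sum.inl) (w' ∘ Sum.inr)}ᶜ}})ᶜ := by
      ext w
      simp only [Set.mem_setOf_eq, Set.mem_compl_iff, Equiv.symm_symm,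
        BoundedFormula.realize_all]
      rw [not_exists]
      apply forall_congr'
      intro t
      rw [not_not]
      have hcl1 : ((Sum.elim w (fun _ : Unit => t)) ∘ (sumFinSuccEquiv n l')) ∘ Sum.inl
          = w ∘ Sum.inl := rfl
      have hcl2 : ((Sum.elim w (fun _ : Unit => t)) ∘ (sumFinSuccEquiv n l')) ∘ Sum.inr
          = Fin.snoc (w ∘ Sum.inr) t := by
        funext j
        refine Fin.lastCases ?_ ?_ j
        · have hE : (sumFinSuccEquiv n l') (Sum.inr (Fin.last l')) = Sum.inr () := by
            simp [sumFinSuccEquiv, Fin.lastCases_last]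
          simp only [Function.comp_apply, hE, Sum.elim_inr, Fin.snoc_last]
        · intro j₀
          have hE : (sumFinSuccEquiv n l') (Sum.inr j₀.castSucc) = Sum.inl (Sum.inr j₀) := by
            simp [sumFinSuccEquiv, Fin.lastCases_castSucc]
          simp only [Function.comp_apply, hE, Sum.elim_inl, Fin.snoc_castSucc]
      rw [hcl1, hcl2]
    rw [hset]
    exact key

theorem nice_of_definable {n : ℕ} {X : Set (Fin n → ℝ)}
    (h : Set.Definable (∅ : Set ℝ) LsLang X) : Nice X := by
  obtain ⟨φ, rfl⟩ := h
  have h0 := nice_of_boundedFormula n 0 φ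
  set e : Fin n ≃ (Fin n ⊕ Fin 0) := (Equiv.sumEmpty (Fin n) (Fin 0)).symm with hedef
  have h1 := nice_reindex e h0
  have hset : {v : Fin n → ℝ | φ.Realize v} =
      {w : Fin n → ℝ | (w ∘ e.symm) ∈
        {w' : (Fin n ⊕ Fin 0) → ℝ |
          BoundedFormula.Realize φ (w' ∘ Sum.inl) (w' ∘ Sum.inr)}} := by
    ext v
    simp only [Set.mem_setOf_eq]
    have h2 : (v ∘ e.symm) ∘ Sum.inl = v := by
      funext i
      simp [hedef]
    have h3 : (v ∘ e.symm) ∘ Sum.inr = (default : Fin 0 → ℝ) :=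
      funext fun j => j.elim0
    rw [h2, h3]
    unfold FirstOrder.Language.Formula.Realize
    exact iff_of_eq (congrArg (BoundedFormula.Realize φ v) (Subsingleton.elim _ _))
  rw [hset]
  exact h1


end St12

/-- Characterization of singularity for `⟨ℝ,+,<,ℤ⟩`-definable sets. -/
theorem stmt12 (n : ℕ) (X : Set (Fin n → ℝ)) (hX : LsDefinable X) (x : Fin n → ℝ) :
    IsSingular X x ↔
      ∀ r > (0 : ℝ), ∃ s > (0 : ℝ), ∀ v : Fin n → ℝ, v ≠ 0 → ‖v‖ < s →
        ∃ y ∈ Metric.ball x r, ∃ z ∈ Metric.ball x r,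
          y = z + v ∧ (y ∈ X ↔ z ∉ X) := by
  constructor
  · intro hsing
    exact St12.geom (St12.nice_locallyConic (St12.nice_of_definable hX) x) hsing
  · intro h v hv
    by_contra hv0
    obtain ⟨r, hr, hstr⟩ := hv
    obtain ⟨s, hs, hmain⟩ := h r hr
    have hvnorm : 0 < ‖v‖ := norm_pos_iff.mpr hv0
    set α : ℝ := s / (2 * ‖v‖) with hαdef
    have hα : 0 < α := div_pos hs (by positivity)
    have hw0 : α • v ≠ 0 := smul_ne_zero (ne_of_gt hα) hv0
    have hwnorm : ‖α • v‖ < s := by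
      rw [norm_smul, Real.norm_eq_abs, abs_of_pos hα, hαdef]
      rw [div_mul_eq_mul_div, mul_comm (2 : ℝ) ‖v‖, ← div_div,
        mul_div_assoc, div_self (ne_of_gt hvnorm), mul_one]
      linarith
    obtain ⟨y, hy, z, hz, hyz, hflip⟩ := hmain (α • v) hw0 hwnorm
    by_cases hzX : z ∈ X
    · have hyX : y ∈ X := hstr y hy ⟨z, ⟨hzX, hz⟩, α, hyz⟩
      exact (hflip.mp hyX) hzX
    · have hyX : y ∈ X := hflip.mpr hzX
      have : z ∈ X := hstr z hz ⟨y, ⟨hyX, hy⟩, -α, by rw [hyz]; module⟩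
      exact hzX this
end

section
/- Let X ⊆ ℝ^n, let E and F be equivalence classes of ∼_X, and let v be a nonzero vector in Str_X(E), where Str_X(E) denotes the common value of Str_X(x) for x ∈ E. Suppose some y ∈ F lies in the topological closure of L_v(y) ∩ E. Then Str_X(F) ⊆ Str_X(E); moreover, if E ≠ F then v ∉ Str_X(F), and therefore dim Str_X(F) < dim Str_X(E). -/
open FirstOrder

section Aux
variable {n : ℕ} {X : Set (Fin n → ℝ)}

lemma simx_refl (x : Fin n → ℝ) : SimX X x x := ⟨1, one_pos, fun _ _ => Iff.rfl⟩

lemma simx_symm {x y : Fin n → ℝ} (h : SimX X x y) : SimX X y x := by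
  obtain ⟨r, hr, H⟩ := h; exact ⟨r, hr, fun w hw => (H w hw).symm⟩

lemma simx_trans {x y z : Fin n → ℝ} (h1 : SimX X x y) (h2 : SimX X y z) : SimX X x z := by
  obtain ⟨r, hr, H1⟩ := h1; obtain ⟨s, hs, H2⟩ := h2
  exact ⟨min r s, lt_min hr hs, fun w hw =>
    (H1 w (lt_of_lt_of_le hw (min_le_left _ _))).trans (H2 w (lt_of_lt_of_le hw (min_le_right _ _)))⟩

lemma isStratum_zero (x : Fin n → ℝ) : IsStratum X x 0 := by
  refine ⟨1, one_pos, ?_⟩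
  rintro p hp ⟨z, ⟨hz, -⟩, α, rfl⟩
  simpa using hz

lemma isStratum_smul {x v : Fin n → ℝ} (c : ℝ) (h : IsStratum X x v) : IsStratum X x (c • v) := by
  obtain ⟨r, hr, H⟩ := h
  refine ⟨r, hr, ?_⟩
  rintro p hp ⟨z, hz, α, rfl⟩
  exact H _ hp ⟨z, hz, α * c, by rw [smul_smul]⟩

lemma isStratum_add {x v w : Fin n → ℝ} (hv : IsStratum X x v) (hw : IsStratum X x w) :
    IsStratum X x (v + w) := by
  obtain ⟨rv, hrv, Hv⟩ := hv
  obtain ⟨rw, hrw, Hw⟩ := hw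
  set r0 := min rv rw with hr0
  have hr0pos : 0 < r0 := lt_min hrv hrw
  refine ⟨r0 / 2, by positivity, ?_⟩
  rintro p hp ⟨z, ⟨hzX, hzb⟩, α, rfl⟩
  obtain ⟨N, hN⟩ := exists_nat_gt (|α| * (‖v‖ + ‖w‖) * 2 / r0)
  set M : ℕ := N + 1 with hM
  have hMpos : (0:ℝ) < (M:ℝ) := by positivity
  have hstep : |α| / M * (‖v‖ + ‖w‖) < r0 / 2 := by
    rw [div_mul_eq_mul_div, div_lt_div_iff₀ hMpos two_pos] at *
    have h1 : |α| * (‖v‖ + ‖w‖) * 2 < r0 * N := by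
      rw [div_lt_iff₀ hr0pos] at hN; nlinarith [hr0pos]
    have : (N:ℝ) ≤ M := by exact_mod_cast Nat.le_succ N
    nlinarith [hr0pos]
  -- the k-th intermediate point
  have hballs : ∀ k : ℕ, k ≤ M → z + ((k * α) / M) • (v + w) ∈ Metric.ball x (r0 / 2) := by
    intro k hk
    have ht0 : (0:ℝ) ≤ (k:ℝ)/M := by positivity
    have ht1 : (k:ℝ)/M ≤ 1 := by
      rw [div_le_one hMpos]; exact_mod_cast hk
    have := (convex_ball x (r0/2)).add_smul_sub_mem hzb hp (Set.mem_Icc.2 ⟨ht0, ht1⟩)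
    have heq : z + ((k:ℝ)/M) • (z + α • (v + w) - z) = z + ((k * α) / M) • (v + w) := by
      rw [add_sub_cancel_left, smul_smul]; ring_nf
    rwa [heq] at this
  have key : ∀ k : ℕ, k ≤ M → z + ((k * α) / M) • (v + w) ∈ X := by
    intro k
    induction k with
    | zero => intro _; simpa using hzX
    | succ k ih =>
      intro hk1
      have hk : k ≤ M := Nat.le_of_succ_le hk1
      have hX := ih hk
      set u := z + ((k * α) / M) • (v + w) with hu
      have hub : u ∈ Metric.ball x (r0/2) := hballs k hk
      set q := u + (α / M) • v with hq
      have hqb : q ∈ Metric.ball x r0 := by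
        rw [mem_ball_iff_norm] at hub ⊢
        have : ‖q - x‖ ≤ ‖u - x‖ + ‖(α/M) • v‖ := by
          have : q - x = (u - x) + (α/M) • v := by rw [hq]; abel
          rw [this]; exact norm_add_le _ _
        have h2 : ‖(α/M) • v‖ ≤ |α|/M * (‖v‖ + ‖w‖) := by
          rw [norm_smul, Real.norm_eq_abs, abs_div, abs_of_pos hMpos]
          have := norm_nonneg w
          nlinarith [abs_nonneg α, norm_nonneg v, hMpos, div_nonneg (abs_nonneg α) hMpos.le]
        linarith
      have hqX : q ∈ X := by
        refine Hv q (Metric.ball_subset_ball (min_le_left rv rw) hqb) ⟨u, ⟨hX, ?_⟩, α/M, rfl⟩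
        exact Metric.ball_subset_ball (by linarith [min_le_left rv rw]) hub
      have heq : z + (((k+1 : ℕ) * α) / M) • (v + w) = q + (α / M) • w := by
        rw [hq, hu]
        push_cast
        match_scalars <;> ring
      rw [heq]
      have hb1 : q + (α/M) • w ∈ Metric.ball x rw := by
        have := hballs (k+1) hk1
        rw [heq] at this
        exact Metric.ball_subset_ball (by linarith [min_le_right rv rw]) this
      exact Hw _ hb1 ⟨q, ⟨hqX, Metric.ball_subset_ball (min_le_right rv rw) hqb⟩, α/M, rfl⟩
  have := key M le_rfl
  have heq : z + ((M * α) / M) • (v + w) = z + α • (v + w) := by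
    rw [mul_div_cancel_left₀ _ hMpos.ne']
  rwa [heq] at this

/-- strata transfer along `SimX`. -/
lemma isStratum_simx {x z v : Fin n → ℝ} (h : SimX X x z) (hs : IsStratum X x v) :
    IsStratum X z v := by
  obtain ⟨ρ, hρ, H⟩ := h
  obtain ⟨r, hr, Hs⟩ := hs
  refine ⟨min ρ r, lt_min hρ hr, ?_⟩
  rintro p hp ⟨u, ⟨huX, hub⟩, α, rfl⟩
  rw [mem_ball_iff_norm] at hp hub
  have hpw : ‖u + α • v - z‖ < min ρ r := hp
  have h1 : x + (u - z) ∈ X := by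
    rw [H (u - z) (lt_of_lt_of_le hub (min_le_left _ _))]
    simpa using huX
  have h2 : x + (u + α • v - z) ∈ X := by
    refine Hs _ ?_ ⟨x + (u - z), ⟨h1, ?_⟩, α, by abel⟩
    · rw [mem_ball_iff_norm]
      simpa using lt_of_lt_of_le hpw (min_le_right _ _)
    · rw [mem_ball_iff_norm]
      simpa using lt_of_lt_of_le hub (min_le_right _ _)
  have := (H (u + α • v - z) (lt_of_lt_of_le hpw (min_le_left _ _))).1 h2
  simpa using this

/-- a stratum at `y` with radius `s` is a stratum at every point of `B(y,s)`. -/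
lemma isStratum_of_ball {y z v : Fin n → ℝ} {s : ℝ}
    (H : ∀ p ∈ Metric.ball y s, (∃ u ∈ X ∩ Metric.ball y s, ∃ α : ℝ, p = u + α • v) → p ∈ X)
    (hz : z ∈ Metric.ball y s) : IsStratum X z v := by
  refine ⟨s - dist z y, by simpa [sub_pos] using hz, ?_⟩
  have hsub : Metric.ball z (s - dist z y) ⊆ Metric.ball y s := by
    intro p hp
    rw [Metric.mem_ball] at *
    calc dist p y ≤ dist p z + dist z y := dist_triangle _ _ _
    _ < s := by linarith
  rintro p hp ⟨u, ⟨huX, hub⟩, α, rfl⟩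
  exact H _ (hsub hp) ⟨u, ⟨huX, hsub hub⟩, α, rfl⟩

end Aux

/-- the strata at `x` form a submodule. -/
def strataSubmodule {n : ℕ} (X : Set (Fin n → ℝ)) (x : Fin n → ℝ) :
    Submodule ℝ (Fin n → ℝ) where
  carrier := {v | IsStratum X x v}
  zero_mem' := isStratum_zero x
  add_mem' := isStratum_add
  smul_mem' := fun c _ h => isStratum_smul c h


set_option maxHeartbeats 1000000 in
/-- If a point `y` of the class `F` of `xF` is adherent to `L_v(y) ∩ E` (where `E` is the
class of `xE` and `v` a nonzero stratum of `E`), then `Str(F) ⊆ Str(E)`; and if `E ≠ F`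
then moreover `v ∉ Str(F)` and `dim Str(F) < dim Str(E)`. -/
theorem stmt13 (n : ℕ) (X : Set (Fin n → ℝ)) (xE xF v : Fin n → ℝ)
    (hv : v ≠ 0) (hvE : IsStratum X xE v)
    (y : Fin n → ℝ) (hyF : SimX X xF y)
    (hadh : y ∈ closure ({z | ∃ α : ℝ, z = y + α • v} ∩ {z | SimX X xE z})) :
    (∀ w : Fin n → ℝ, IsStratum X xF w → IsStratum X xE w) ∧
    ({z | SimX X xE z} ≠ {z | SimX X xF z} →
      ¬ IsStratum X xF v ∧ strDim X xF < strDim X xE) := by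
  have part1 : ∀ w : Fin n → ℝ, IsStratum X xF w → IsStratum X xE w := by
    intro w hw
    have hwy : IsStratum X y w := isStratum_simx hyF hw
    obtain ⟨s, hs, H⟩ := hwy
    obtain ⟨z, ⟨⟨α, hzα⟩, hzE⟩, hzd⟩ := Metric.mem_closure_iff.1 hadh s hs
    have hzb : z ∈ Metric.ball y s := by rwa [Metric.mem_ball, dist_comm]
    exact isStratum_simx (simx_symm hzE) (isStratum_of_ball H hzb)
  refine ⟨part1, fun hne => ?_⟩
  have hvF : ¬ IsStratum X xF v := by
    intro hvF
    apply hne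
    have hvy : IsStratum X y v := isStratum_simx hyF hvF
    obtain ⟨s, hs, H⟩ := hvy
    obtain ⟨z, ⟨⟨α, hzα⟩, hzE⟩, hzd⟩ := Metric.mem_closure_iff.1 hadh s hs
    have hd : ‖z - y‖ = dist y z := by rw [dist_comm, dist_eq_norm]
    have hdnn : (0:ℝ) ≤ dist y z := dist_nonneg
    have hyz : SimX X y z := by
      refine ⟨s - dist y z, by linarith, fun w hw => ?_⟩
      have hb1 : y + w ∈ Metric.ball y s := by
        rw [mem_ball_iff_norm]
        simpa using lt_of_lt_of_le hw (by linarith)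
      have hb2 : z + w ∈ Metric.ball y s := by
        rw [mem_ball_iff_norm, show z + w - y = (z - y) + w by abel]
        calc ‖(z - y) + w‖ ≤ ‖z - y‖ + ‖w‖ := norm_add_le _ _
          _ < s := by rw [hd]; linarith
      constructor
      · intro hx
        exact H (z + w) hb2 ⟨y + w, ⟨hx, hb1⟩, α, by rw [hzα]; abel⟩
      · intro hx
        refine H (y + w) hb1 ⟨z + w, ⟨hx, hb2⟩, -α, ?_⟩
        rw [hzα, neg_smul]; abel
    have hEF : SimX X xE xF :=
      simx_trans (simx_trans hzE (simx_symm hyz)) (simx_symm hyF)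
    exact Set.ext fun p =>
      ⟨fun h => simx_trans (simx_symm hEF) h, fun h => simx_trans hEF h⟩
  refine ⟨hvF, ?_⟩
  have hlt : Submodule.span ℝ {w | IsStratum X xF w} < Submodule.span ℝ {w | IsStratum X xE w} := by
    refine lt_of_le_of_ne (Submodule.span_mono fun w hw => part1 w hw) ?_
    intro hEq
    apply hvF
    have hvmem : v ∈ Submodule.span ℝ {w | IsStratum X xF w} := by
      rw [hEq]; exact Submodule.subset_span hvE
    have hle : Submodule.span ℝ {w | IsStratum X xF w} ≤ strataSubmodule X xF :=
      Submodule.span_le.2 (fun w hw => hw)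
    exact hle hvmem
  show Module.finrank ℝ (Submodule.span ℝ {w | IsStratum X xF w}) <
    Module.finrank ℝ (Submodule.span ℝ {w | IsStratum X xE w})
  exact Submodule.finrank_lt_finrank_of_lt hlt
end

section
/- Let X ⊆ ℝ^n, let x ∈ ℝ^n be a non-X-singular point, let E be the ∼_X-equivalence class of x, and let v ∈ Str_X(x) be nonzero. Then for every y ∈ L_v(x) ∩ E there exist α, β ∈ (0, ∞] such that the open segment {y + tv : −α < t < β} is contained in E and is maximal among open segments of L_v(x) around y contained in E. Moreover, if α < ∞ then the point y − αv belongs to a ∼_X-class F with F ≠ E and dim Str_X(F) < dim Str_X(E), and likewise if β < ∞ then y + βv belongs to a ∼_X-class F with F ≠ E and dim Str_X(F) < dim Str_X(E). -/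
open FirstOrder

namespace Stmt14Aux

variable {n : ℕ}

/-- local translation invariance along `w` with radius `r`. -/
def Inv (X : Set (Fin n → ℝ)) (z w : Fin n → ℝ) (r : ℝ) : Prop :=
  ∀ u : Fin n → ℝ, ∀ t : ℝ, ‖u‖ < r → ‖u + t • w‖ < r →
    (z + u ∈ X ↔ z + u + t • w ∈ X)

lemma inv_of_stratum {X : Set (Fin n → ℝ)} {z w : Fin n → ℝ}
    (h : IsStratum X z w) : ∃ r > (0:ℝ), Inv X z w r := by
  obtain ⟨r, hr, hs⟩ := h
  refine ⟨r, hr, fun u t hu hut => ?_⟩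
  constructor
  · intro hX
    refine hs (z + u + t • w) (by simpa [Metric.mem_ball, dist_self_add_right, add_assoc] using hut)
      ⟨z + u, ⟨hX, by simpa [Metric.mem_ball, dist_self_add_right] using hu⟩, t, rfl⟩
  · intro hX
    refine hs (z + u) (by simpa [Metric.mem_ball, dist_self_add_right] using hu)
      ⟨z + u + t • w, ⟨hX, by simpa [Metric.mem_ball, dist_self_add_right, add_assoc] using hut⟩,
        -t, by module⟩

lemma stratum_of_inv {X : Set (Fin n → ℝ)} {z w : Fin n → ℝ} {r : ℝ}
    (hr : 0 < r) (h : Inv X z w r) : IsStratum X z w := by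
  refine ⟨r, hr, fun y hy ⟨z', ⟨hz'X, hz'b⟩, t, hyz⟩ => ?_⟩
  have h1 : ‖z' - z‖ < r := by
    simpa [Metric.mem_ball, dist_eq_norm] using hz'b
  have h2 : ‖(z' - z) + t • w‖ < r := by
    have : y - z = (z' - z) + t • w := by rw [hyz]; module
    rw [← this]; simpa [Metric.mem_ball, dist_eq_norm] using hy
  have := (h (z' - z) t h1 h2).mp (by simpa using hz'X)
  have hy' : y = z + (z' - z) + t • w := by rw [hyz]; module
  rwa [← hy'] at this

lemma inv_zero {X : Set (Fin n → ℝ)} {z : Fin n → ℝ} {r : ℝ} :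
    Inv X z (0 : Fin n → ℝ) r := by
  intro u t hu hut; simp

lemma inv_smul {X : Set (Fin n → ℝ)} {z w : Fin n → ℝ} {r : ℝ} (c : ℝ)
    (h : Inv X z w r) : Inv X z (c • w) r := by
  intro u t hu hut
  have : t • (c • w) = (t * c) • w := by module
  rw [this] at hut ⊢
  exact h u (t * c) hu hut

lemma inv_add {X : Set (Fin n → ℝ)} {z w₁ w₂ : Fin n → ℝ} {r₁ r₂ : ℝ}
    (hr₁ : 0 < r₁) (hr₂ : 0 < r₂)
    (h₁ : Inv X z w₁ r₁) (h₂ : Inv X z w₂ r₂) :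
    Inv X z (w₁ + w₂) (min r₁ r₂ / 2) := by
  set ρ := min r₁ r₂ / 2 with hρdef
  have hρ : 0 < ρ := by positivity
  have hρr₁ : 2 * ρ ≤ r₁ := by
    have := min_le_left r₁ r₂; simp only [hρdef]; linarith
  have hρr₂ : 2 * ρ ≤ r₂ := by
    have := min_le_right r₁ r₂; simp only [hρdef]; linarith
  have key : ∀ N : ℕ, ∀ u : Fin n → ℝ, ∀ t : ℝ, ‖u‖ < ρ → ‖u + t • (w₁ + w₂)‖ < ρ →
      |t| * (‖w₁‖ + ‖w₂‖) ≤ N * ρ → (z + u ∈ X ↔ z + u + t • (w₁ + w₂) ∈ X) := by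
    intro N
    induction N with
    | zero =>
      intro u t hu hut hbound
      have h0 : ‖t • (w₁ + w₂)‖ = 0 := by
        have h1 : ‖t • (w₁ + w₂)‖ ≤ |t| * (‖w₁‖ + ‖w₂‖) := by
          rw [norm_smul]
          exact mul_le_mul_of_nonneg_left (norm_add_le _ _) (abs_nonneg t)
        have h2 : (0:ℝ) ≤ ‖t • (w₁ + w₂)‖ := norm_nonneg _
        simp only [Nat.cast_zero, zero_mul] at hbound
        linarith
      rw [norm_eq_zero] at h0
      rw [h0]; simp
    | succ N ih =>
      intro u t hu hut hbound
      set s := t / (N + 1) with hs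
      have hNpos : (0:ℝ) < N + 1 := by positivity
      have hsw : |s| * (‖w₁‖ + ‖w₂‖) ≤ ρ := by
        have : |s| = |t| / (N + 1) := by rw [hs, abs_div]; congr 1; rw [abs_of_pos hNpos]
        rw [this, div_mul_eq_mul_div, div_le_iff₀ hNpos]
        calc |t| * (‖w₁‖ + ‖w₂‖) ≤ (N + 1) * ρ := by
              simpa [Nat.cast_succ] using hbound
          _ = ρ * (N + 1) := by ring
      have hsw₁ : |s| * ‖w₁‖ ≤ ρ := by
        have h1 : |s| * ‖w₁‖ ≤ |s| * (‖w₁‖ + ‖w₂‖) :=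
          mul_le_mul_of_nonneg_left (by linarith [norm_nonneg w₂]) (abs_nonneg s)
        linarith
      have hsw₂ : |s| * ‖w₂‖ ≤ ρ := by
        have h1 : |s| * ‖w₂‖ ≤ |s| * (‖w₁‖ + ‖w₂‖) :=
          mul_le_mul_of_nonneg_left (by linarith [norm_nonneg w₁]) (abs_nonneg s)
        linarith
      set u' := u + s • (w₁ + w₂) with hu'
      have hu'norm : ‖u'‖ < ρ := by
        set c := (1:ℝ) / (N + 1) with hc
        have hc0 : 0 ≤ c := by positivity
        have hc1 : c ≤ 1 := by
          rw [hc, div_le_one hNpos]; linarith [Nat.cast_nonneg (α := ℝ) N]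
        have hrepr : u' = (1 - c) • u + c • (u + t • (w₁ + w₂)) := by
          rw [hu', hc, hs]; match_scalars <;> field_simp <;> ring
        calc ‖u'‖ ≤ (1 - c) * ‖u‖ + c * ‖u + t • (w₁ + w₂)‖ := by
              rw [hrepr]
              refine (norm_add_le _ _).trans ?_
              rw [norm_smul, norm_smul, Real.norm_eq_abs, Real.norm_eq_abs,
                abs_of_nonneg (by linarith), abs_of_nonneg hc0]
          _ < (1 - c) * ρ + c * ρ := by
              rcases eq_or_lt_of_le hc1 with h | h
              · rw [h]; simpa using hut
              · have : (1 - c) * ‖u‖ < (1 - c) * ρ :=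
                  mul_lt_mul_of_pos_left hu (by linarith)
                have h2 : c * ‖u + t • (w₁ + w₂)‖ ≤ c * ρ :=
                  mul_le_mul_of_nonneg_left (le_of_lt hut) hc0
                linarith
          _ = ρ := by ring
      -- step 1: along w₁
      have step1 : (z + u ∈ X ↔ z + u + s • w₁ ∈ X) := by
        refine h₁ u s (lt_of_lt_of_le hu (by linarith)) ?_
        calc ‖u + s • w₁‖ ≤ ‖u‖ + ‖s • w₁‖ := norm_add_le _ _
          _ < ρ + ρ := by
              refine add_lt_add_of_lt_of_le hu ?_
              rw [norm_smul, Real.norm_eq_abs]; exact hsw₁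
          _ ≤ r₁ := by linarith
      -- step 2: along w₂
      have step2 : (z + (u + s • w₁) ∈ X ↔ z + (u + s • w₁) + s • w₂ ∈ X) := by
        refine h₂ (u + s • w₁) s ?_ ?_
        · calc ‖u + s • w₁‖ ≤ ‖u‖ + ‖s • w₁‖ := norm_add_le _ _
            _ < ρ + ρ := by
                refine add_lt_add_of_lt_of_le hu ?_
                rw [norm_smul, Real.norm_eq_abs]; exact hsw₁
            _ ≤ r₂ := by linarith
        · have heq : u + s • w₁ + s • w₂ = u' := by rw [hu']; module
          rw [heq]
          exact lt_of_lt_of_le hu'norm (by linarith)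
      -- step 3: induction
      have step3 : (z + u' ∈ X ↔ z + u' + (t - s) • (w₁ + w₂) ∈ X) := by
        refine ih u' (t - s) hu'norm ?_ ?_
        · have heq : u' + (t - s) • (w₁ + w₂) = u + t • (w₁ + w₂) := by rw [hu']; module
          rw [heq]; exact hut
        · have hts : t - s = t * (N / (N + 1)) := by
            rw [hs]; field_simp; ring
          have habs : |t - s| = |t| * (N / (N + 1)) := by
            rw [hts, abs_mul]; congr 1
            rw [abs_of_nonneg (by positivity)]
          rw [habs]
          have h1 : |t| * (N / (N + 1)) * (‖w₁‖ + ‖w₂‖)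
              = (|t| * (‖w₁‖ + ‖w₂‖)) * (N / (N + 1)) := by ring
          rw [h1]
          calc (|t| * (‖w₁‖ + ‖w₂‖)) * (N / (N + 1)) ≤ ((N + 1) * ρ) * (N / (N + 1)) := by
                refine mul_le_mul_of_nonneg_right ?_ (by positivity)
                simpa [Nat.cast_succ] using hbound
            _ = N * ρ := by field_simp
      have e1 : z + u + s • w₁ = z + (u + s • w₁) := by module
      have e2 : z + (u + s • w₁) + s • w₂ = z + u' := by rw [hu']; module
      have e3 : z + u' + (t - s) • (w₁ + w₂) = z + u + t • (w₁ + w₂) := by rw [hu']; module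
      rw [e1] at step1
      rw [e2] at step2
      rw [e3] at step3
      exact step1.trans (step2.trans step3)
  intro u t hu hut
  obtain ⟨N, hN⟩ := exists_nat_ge (|t| * (‖w₁‖ + ‖w₂‖) / ρ)
  refine key N u t hu hut ?_
  rw [div_le_iff₀ hρ] at hN
  linarith

/-- the strata at `z` form a submodule. -/
def strSub (X : Set (Fin n → ℝ)) (z : Fin n → ℝ) : Submodule ℝ (Fin n → ℝ) where
  carrier := {v | IsStratum X z v}
  zero_mem' := ⟨1, one_pos, fun y hy ⟨z', ⟨hz'X, _⟩, t, hyz⟩ => by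
    rw [hyz]; simpa using hz'X⟩
  add_mem' := by
    rintro w₁ w₂ h₁ h₂
    obtain ⟨r₁, hr₁, hi₁⟩ := inv_of_stratum h₁
    obtain ⟨r₂, hr₂, hi₂⟩ := inv_of_stratum h₂
    exact stratum_of_inv (by positivity) (inv_add hr₁ hr₂ hi₁ hi₂)
  smul_mem' := by
    rintro c w h
    obtain ⟨r, hr, hi⟩ := inv_of_stratum h
    exact stratum_of_inv hr (inv_smul c hi)

lemma span_strata (X : Set (Fin n → ℝ)) (z : Fin n → ℝ) :
    Submodule.span ℝ {v | IsStratum X z v} = strSub X z :=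
  Submodule.span_eq (strSub X z)

lemma simX_refl (X : Set (Fin n → ℝ)) (z : Fin n → ℝ) : SimX X z z :=
  ⟨1, one_pos, fun _ _ => Iff.rfl⟩

lemma simX_symm {X : Set (Fin n → ℝ)} {z z' : Fin n → ℝ} (h : SimX X z z') : SimX X z' z := by
  obtain ⟨r, hr, hs⟩ := h
  exact ⟨r, hr, fun w hw => (hs w hw).symm⟩

lemma simX_trans {X : Set (Fin n → ℝ)} {z₁ z₂ z₃ : Fin n → ℝ}
    (h : SimX X z₁ z₂) (h' : SimX X z₂ z₃) : SimX X z₁ z₃ := by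
  obtain ⟨r, hr, hs⟩ := h
  obtain ⟨r', hr', hs'⟩ := h'
  refine ⟨min r r', lt_min hr hr', fun w hw => ?_⟩
  rw [hs w (lt_of_lt_of_le hw (min_le_left _ _)), hs' w (lt_of_lt_of_le hw (min_le_right _ _))]

/-- moving a little along an invariance direction stays in the same class. -/
lemma simX_translate {X : Set (Fin n → ℝ)} {z w : Fin n → ℝ} {r t : ℝ}
    (h : Inv X z w r) (ht : |t| * ‖w‖ < r / 2) : SimX X z (z + t • w) := by
  have h0 : (0:ℝ) ≤ |t| * ‖w‖ := by positivity
  have hr : 0 < r := by linarith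
  refine ⟨r / 2, by positivity, fun u hu => ?_⟩
  have h1 : ‖u + t • w‖ < r := by
    calc ‖u + t • w‖ ≤ ‖u‖ + ‖t • w‖ := norm_add_le _ _
      _ < r / 2 + r / 2 := by
          refine add_lt_add hu ?_
          rw [norm_smul, Real.norm_eq_abs]; exact ht
      _ = r := by ring
  have key := h u t (lt_of_lt_of_le hu (by linarith)) h1
  have heq : z + u + t • w = z + t • w + u := by module
  rw [heq] at key
  exact key

/-- strata transfer along `SimX`. -/
lemma stratum_congr {X : Set (Fin n → ℝ)} {z z' w : Fin n → ℝ}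
    (h : SimX X z z') (hw : IsStratum X z w) : IsStratum X z' w := by
  obtain ⟨r₁, hr₁, hs⟩ := h
  obtain ⟨r₂, hr₂, hi⟩ := inv_of_stratum hw
  refine stratum_of_inv (r := min r₁ r₂) (lt_min hr₁ hr₂) ?_
  intro u t hu hut
  have hu₁ : ‖u‖ < r₁ := lt_of_lt_of_le hu (min_le_left _ _)
  have hut₁ : ‖u + t • w‖ < r₁ := lt_of_lt_of_le hut (min_le_left _ _)
  rw [← hs u hu₁, show z' + u + t • w = z' + (u + t • w) by module,
    ← hs (u + t • w) hut₁, show z + (u + t • w) = z + u + t • w by module]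
  exact hi u t (lt_of_lt_of_le hu (min_le_right _ _)) (lt_of_lt_of_le hut (min_le_right _ _))

/-- invariance is local: nearby points inherit it with smaller radius. -/
lemma inv_mono_center {X : Set (Fin n → ℝ)} {z z' w : Fin n → ℝ} {r : ℝ}
    (h : Inv X z w r) (hz' : ‖z' - z‖ < r) : Inv X z' w (r - ‖z' - z‖) := by
  intro u t hu hut
  have e1 : z' + u = z + (u + (z' - z)) := by module
  have e2 : z' + u + t • w = z + (u + (z' - z)) + t • w := by module
  rw [e2, e1]
  refine h (u + (z' - z)) t ?_ ?_
  · calc ‖u + (z' - z)‖ ≤ ‖u‖ + ‖z' - z‖ := norm_add_le _ _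
      _ < r := by linarith
  · have e3 : u + (z' - z) + t • w = (u + t • w) + (z' - z) := by module
    rw [e3]
    calc ‖(u + t • w) + (z' - z)‖ ≤ ‖u + t • w‖ + ‖z' - z‖ := norm_add_le _ _
      _ < r := by linarith

lemma mem_strSub {X : Set (Fin n → ℝ)} {z v : Fin n → ℝ} :
    v ∈ strSub X z ↔ IsStratum X z v := Iff.rfl

lemma open_step {X : Set (Fin n → ℝ)} {x y u : Fin n → ℝ}
    (hu : IsStratum X x u) (hunorm : 0 < ‖u‖) {t : ℝ} (ht : SimX X x (y + t • u)) :
    ∃ ε > (0:ℝ), ∀ s : ℝ, |s| < ε → SimX X x (y + (t + s) • u) := by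
  have hstr : IsStratum X (y + t • u) u := stratum_congr ht hu
  obtain ⟨r, hr, hi⟩ := inv_of_stratum hstr
  refine ⟨r / (4 * ‖u‖), by positivity, fun s hs => ?_⟩
  have hsu : |s| * ‖u‖ < r / 2 := by
    have := mul_lt_mul_of_pos_right hs hunorm
    rw [div_mul_eq_mul_div] at this
    calc |s| * ‖u‖ < r * ‖u‖ / (4 * ‖u‖) := this
      _ = r / 4 := by field_simp
      _ < r / 2 := by linarith
  have htr := simX_translate hi hsu
  have heq : y + t • u + s • u = y + (t + s) • u := by module
  rw [heq] at htr
  exact simX_trans ht htr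

lemma oneSided {X : Set (Fin n → ℝ)} {x v : Fin n → ℝ}
    (hvs : IsStratum X x v) (hv : 0 < ‖v‖) (y : Fin n → ℝ) (hyE : SimX X x y) :
    ∃ β : EReal, 0 < β ∧
      (∀ t : ℝ, 0 ≤ t → (t : EReal) < β → SimX X x (y + t • v)) ∧
      (∀ β' : EReal, (∀ t : ℝ, 0 ≤ t → (t : EReal) < β' → SimX X x (y + t • v)) → β' ≤ β) ∧
      (∀ b : ℝ, β = (b : EReal) →
        ¬ SimX X x (y + b • v) ∧ strSub X (y + b • v) < strSub X x) := by
  classical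
  set A : Set EReal :=
    {e | ∃ b' : ℝ, e = (b' : EReal) ∧ 0 ≤ b' ∧
      ∀ s : ℝ, 0 ≤ s → s ≤ b' → SimX X x (y + s • v)} with hA
  refine ⟨sSup A, ?_, ?_, ?_, ?_⟩
  case _ =>
    -- 0 < sSup A
    have h0 : SimX X x (y + (0:ℝ) • v) := by simpa using hyE
    obtain ⟨ε, hε, hstep⟩ := open_step hvs hv h0
    have hmem : ((ε / 2 : ℝ) : EReal) ∈ A := by
      refine ⟨ε / 2, rfl, by positivity, fun s hs0 hs1 => ?_⟩
      have := hstep s (by rw [abs_of_nonneg hs0]; linarith)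
      simpa using this
    calc (0 : EReal) < ((ε / 2 : ℝ) : EReal) := by
          exact_mod_cast (by positivity : (0:ℝ) < ε / 2)
      _ ≤ sSup A := le_sSup hmem
  case _ =>
    intro t ht0 htβ
    obtain ⟨e, heA, hte⟩ := lt_sSup_iff.mp htβ
    obtain ⟨b', rfl, hb'0, hb'⟩ := heA
    exact hb' t ht0 (le_of_lt (by exact_mod_cast hte))
  case _ =>
    intro β' hβ'
    by_contra hlt
    push_neg at hlt
    obtain ⟨c, hc1, hc2⟩ := EReal.exists_between_coe_real hlt
    have hcA : ((c : ℝ) : EReal) ∈ A := by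
      refine ⟨c, rfl, ?_, fun s hs0 hs1 => ?_⟩
      · by_contra hc0
        push_neg at hc0
        have h0 : SimX X x (y + (0:ℝ) • v) := by simpa using hyE
        obtain ⟨ε, hε, hstep⟩ := open_step hvs hv h0
        have hmem : ((ε / 2 : ℝ) : EReal) ∈ A := by
          refine ⟨ε / 2, rfl, by positivity, fun s hs0 hs1 => ?_⟩
          have := hstep s (by rw [abs_of_nonneg hs0]; linarith)
          simpa using this
        have h1 : ((ε / 2 : ℝ) : EReal) ≤ sSup A := le_sSup hmem
        have h2 : ((c : ℝ) : EReal) ≤ ((ε/2 : ℝ) : EReal) := by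
          exact_mod_cast (by positivity : (0:ℝ) < ε/2).le.trans' hc0.le
        exact absurd (lt_of_le_of_lt (h2.trans h1) hc1) (lt_irrefl _)
      · refine hβ' s hs0 (lt_of_le_of_lt ?_ hc2)
        exact_mod_cast hs1
    exact absurd (lt_of_le_of_lt (le_sSup hcA) hc1) (lt_irrefl _)
  case _ =>
    intro b hb
    have hb0 : (0:ℝ) < b := by
      have : (0 : EReal) < (b : EReal) := by
        rw [← hb]
        -- reprove positivity
        have h0 : SimX X x (y + (0:ℝ) • v) := by simpa using hyE
        obtain ⟨ε, hε, hstep⟩ := open_step hvs hv h0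
        have hmem : ((ε / 2 : ℝ) : EReal) ∈ A := by
          refine ⟨ε / 2, rfl, by positivity, fun s hs0 hs1 => ?_⟩
          have := hstep s (by rw [abs_of_nonneg hs0]; linarith)
          simpa using this
        calc (0 : EReal) < ((ε / 2 : ℝ) : EReal) := by
              exact_mod_cast (by positivity : (0:ℝ) < ε / 2)
          _ ≤ sSup A := le_sSup hmem
      exact_mod_cast this
    have hbelow : ∀ t : ℝ, 0 ≤ t → t < b → SimX X x (y + t • v) := by
      intro t ht0 htb
      have : (t : EReal) < sSup A := by rw [hb]; exact_mod_cast htb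
      obtain ⟨e, heA, hte⟩ := lt_sSup_iff.mp this
      obtain ⟨b', rfl, hb'0, hb'⟩ := heA
      exact hb' t ht0 (le_of_lt (by exact_mod_cast hte))
    have hnot : ¬ SimX X x (y + b • v) := by
      intro hsim
      obtain ⟨ε, hε, hstep⟩ := open_step hvs hv hsim
      have hmem : ((b + ε / 2 : ℝ) : EReal) ∈ A := by
        refine ⟨b + ε / 2, rfl, by positivity, fun s hs0 hs1 => ?_⟩
        rcases lt_or_ge s b with h | h
        · exact hbelow s hs0 h
        · have := hstep (s - b) (by rw [abs_of_nonneg (by linarith)]; linarith)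
          simpa using this
      have := le_sSup hmem
      rw [hb] at this
      have : (b + ε / 2 : ℝ) ≤ b := by exact_mod_cast this
      linarith
    refine ⟨hnot, ?_⟩
    have hle : strSub X (y + b • v) ≤ strSub X x := by
      intro w hw
      rw [mem_strSub] at hw ⊢
      obtain ⟨r, hr, hi⟩ := inv_of_stratum hw
      set δ : ℝ := min b (r / ‖v‖) / 2 with hδ
      have hδ0 : 0 < δ := by
        have : 0 < r / ‖v‖ := by positivity
        simp only [hδ]
        positivity
      have hδb : δ < b := by
        have h1 : min b (r / ‖v‖) ≤ b := min_le_left _ _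
        simp only [hδ]; linarith
      have hδr : δ * ‖v‖ < r := by
        have h1 : min b (r / ‖v‖) ≤ r / ‖v‖ := min_le_right _ _
        have h2 : δ ≤ r / ‖v‖ / 2 := by simp only [hδ]; linarith
        have h3 : δ * ‖v‖ ≤ r / ‖v‖ / 2 * ‖v‖ := mul_le_mul_of_nonneg_right h2 (norm_nonneg v)
        have h4 : r / ‖v‖ / 2 * ‖v‖ = r / 2 := by field_simp
        rw [h4] at h3
        linarith
      set t : ℝ := b - δ with htdef
      have hnormdiff : ‖(y + t • v) - (y + b • v)‖ < r := by
        have heq : (y + t • v) - (y + b • v) = (-δ) • v := by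
          simp only [htdef]; module
        rw [heq, norm_smul, Real.norm_eq_abs, abs_neg, abs_of_pos hδ0]
        exact hδr
      have hinv' := inv_mono_center hi hnormdiff
      have hrpos : 0 < r - ‖(y + t • v) - (y + b • v)‖ := by linarith
      have hstr' : IsStratum X (y + t • v) w := stratum_of_inv hrpos hinv'
      have hsim' : SimX X x (y + t • v) := hbelow t (by simp only [htdef]; linarith) (by simp only [htdef]; linarith)
      exact stratum_congr (simX_symm hsim') hstr'
    refine lt_of_le_of_ne hle ?_
    intro heq
    have hvz : IsStratum X (y + b • v) v := by
      rw [← mem_strSub, heq, mem_strSub]; exact hvs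
    obtain ⟨r, hr, hi⟩ := inv_of_stratum hvz
    set δ : ℝ := min b (r / (2 * ‖v‖)) / 2 with hδ
    have hδ0 : 0 < δ := by
      have : 0 < r / (2 * ‖v‖) := by positivity
      simp only [hδ]; positivity
    have hδb : δ < b := by
      have h1 : min b (r / (2 * ‖v‖)) ≤ b := min_le_left _ _
      simp only [hδ]; linarith
    have hδr : |(-δ : ℝ)| * ‖v‖ < r / 2 := by
      rw [abs_neg, abs_of_pos hδ0]
      have h1 : min b (r / (2 * ‖v‖)) ≤ r / (2 * ‖v‖) := min_le_right _ _
      have h2 : δ ≤ r / (2 * ‖v‖) / 2 := by simp only [hδ]; linarith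
      have h3 : δ * ‖v‖ ≤ r / (2 * ‖v‖) / 2 * ‖v‖ := mul_le_mul_of_nonneg_right h2 (norm_nonneg v)
      have h4 : r / (2 * ‖v‖) / 2 * ‖v‖ = r / 4 := by field_simp; ring
      rw [h4] at h3
      linarith
    have htr := simX_translate hi hδr
    have heq2 : (y + b • v) + (-δ) • v = y + (b - δ) • v := by module
    rw [heq2] at htr
    have hsim' : SimX X x (y + (b - δ) • v) := hbelow (b - δ) (by linarith) (by linarith)
    exact hnot (simX_trans hsim' (simX_symm htr))

lemma strDim_eq (X : Set (Fin n → ℝ)) (z : Fin n → ℝ) :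
    strDim X z = Module.finrank ℝ (strSub X z) := by
  unfold strDim; rw [span_strata]

end Stmt14Aux

/-- Around any point `y` of `L_v(x) ∩ E` (where `E` is the class of a nonsingular point `x`
and `v ∈ Str(x)` is nonzero) there is a maximal open segment of `L_v(x)` contained in `E`,
and each finite endpoint of this segment lies in a class `F ≠ E` with
`dim Str(F) < dim Str(E)`. -/
theorem stmt14 (n : ℕ) (X : Set (Fin n → ℝ)) (x v : Fin n → ℝ)
    (hns : ¬ IsSingular X x) (hv : v ≠ 0) (hvs : IsStratum X x v)
    (y : Fin n → ℝ) (hyL : ∃ t : ℝ, y = x + t • v) (hyE : SimX X x y) :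
    ∃ α β : EReal, 0 < α ∧ 0 < β ∧
      (∀ t : ℝ, -α < (t : EReal) → (t : EReal) < β → SimX X x (y + t • v)) ∧
      (∀ α' β' : EReal, 0 < α' → 0 < β' →
        (∀ t : ℝ, -α' < (t : EReal) → (t : EReal) < β' → SimX X x (y + t • v)) →
        α' ≤ α ∧ β' ≤ β) ∧
      (∀ a : ℝ, α = (a : EReal) →
        ¬ SimX X x (y - a • v) ∧ strDim X (y - a • v) < strDim X x) ∧
      (∀ b : ℝ, β = (b : EReal) →
        ¬ SimX X x (y + b • v) ∧ strDim X (y + b • v) < strDim X x) := by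
  have hvnorm : 0 < ‖v‖ := norm_pos_iff.mpr hv
  have hvs' : IsStratum X x (-v) := by
    have := (Stmt14Aux.strSub X x).neg_mem (Stmt14Aux.mem_strSub.mpr hvs)
    rwa [Stmt14Aux.mem_strSub] at this
  obtain ⟨β, hβ0, hβmem, hβmax, hβend⟩ := Stmt14Aux.oneSided hvs hvnorm y hyE
  obtain ⟨α, hα0, hαmem, hαmax, hαend⟩ := Stmt14Aux.oneSided hvs' (by rwa [norm_neg]) y hyE
  refine ⟨α, β, hα0, hβ0, ?_, ?_, ?_, ?_⟩
  · intro t htα htβ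
    rcases le_or_gt 0 t with h | h
    · exact hβmem t h htβ
    · have h1 : ((-t : ℝ) : EReal) < α := by
        rw [EReal.coe_neg]; exact EReal.neg_lt_comm.mp htα
      have h2 := hαmem (-t) (by linarith) h1
      have heq : y + (-t) • (-v) = y + t • v := by module
      rwa [heq] at h2
  · intro α' β' hα' hβ' hyp
    constructor
    · refine hαmax α' (fun t ht0 htα' => ?_)
      have h1 : -α' < ((-t : ℝ) : EReal) := by
        rw [EReal.coe_neg]
        exact EReal.neg_lt_comm.mpr (by rw [neg_neg]; exact htα')
      have h2 : ((-t : ℝ) : EReal) < β' := by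
        have h3 : ((-t : ℝ) : EReal) ≤ ((0 : ℝ) : EReal) := by
          exact_mod_cast (by linarith : (-t : ℝ) ≤ 0)
        exact lt_of_le_of_lt (by simpa using h3) hβ'
      have := hyp (-t) h1 h2
      have heq : y + (-t) • v = y + t • (-v) := by module
      rwa [heq] at this
    · refine hβmax β' (fun t ht0 htβ' => ?_)
      refine hyp t ?_ htβ'
      have h1 : -α' < (0 : EReal) := by
        refine EReal.neg_lt_comm.mpr ?_
        rw [neg_zero]; exact hα'
      have h2 : ((0:ℝ) : EReal) ≤ (t : EReal) := by exact_mod_cast ht0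
      exact lt_of_lt_of_le h1 (by simpa using h2)
  · intro a ha
    obtain ⟨h1, h2⟩ := hαend a ha
    have heq : y + a • (-v) = y - a • v := by module
    rw [heq] at h1 h2
    refine ⟨h1, ?_⟩
    rw [Stmt14Aux.strDim_eq, Stmt14Aux.strDim_eq]
    exact Submodule.finrank_lt_finrank_of_lt h2
  · intro b hb
    obtain ⟨h1, h2⟩ := hβend b hb
    refine ⟨h1, ?_⟩
    rw [Stmt14Aux.strDim_eq, Stmt14Aux.strDim_eq]
    exact Submodule.finrank_lt_finrank_of_lt h2
end
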